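/- arXiv:2103.08437 — 4 statements merged into one kernel-verified Lean document; each statement's English description precedes it below -/
import Mathlib

section
/- Let F be a graph with no isolated vertices that contains an isolated edge (an edge both of whose endpoints have degree 1 in F). Then for every r ≥ 3 there is a constant C such that for all n, the minimum number of hyperedges in an n-vertex r-uniform Berge-F-saturated hypergraph is at most C·n. -/
def SimpleGraph.IsBergeCopyIn {α V : Type*} (F : SimpleGraph α) (H : Finset (Finset V)) : Prop :=
  ∃ (φ : α → V) (f : Sym2 α → Finset V), Function.Injective φ ∧
    Set.InjOn f F.edgeSet ∧ ∀ e ∈ F.edgeSet, f e ∈ H ∧ ∀ a ∈ e, φ a ∈ f e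

def BergeSaturated {α : Type*} (F : SimpleGraph α) (r n : ℕ)
    (H : Finset (Finset (Fin n))) : Prop :=
  (∀ h ∈ H, h.card = r) ∧ ¬ F.IsBergeCopyIn H ∧
    ∀ h : Finset (Fin n), h.card = r → h ∉ H → F.IsBergeCopyIn (insert h H)


section BergeAux
set_option linter.unusedSectionVars false
open Finset

open Finset

section pfin
variable {α γ : Type*} [DecidableEq γ]

def pfin (g : α → γ) (e : Sym2 α) : Finset γ :=
  Sym2.lift ⟨fun a b => ({g a, g b} : Finset γ), fun a b => Finset.pair_comm (g a) (g b)⟩ e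

@[simp] lemma pfin_mk (g : α → γ) (a b : α) : pfin g s(a, b) = {g a, g b} := rfl

lemma mem_pfin (g : α → γ) {e : Sym2 α} {a : α} (ha : a ∈ e) : g a ∈ pfin g e := by
  induction e with
  | _ x y =>
    rcases Sym2.mem_iff.mp ha with h | h <;> subst h <;> simp

lemma pfin_subset {g : α → γ} {e : Sym2 α} {T : Finset γ} (hT : ∀ a ∈ e, g a ∈ T) :
    pfin g e ⊆ T := by
  induction e with
  | _ x y =>
    intro v hv
    simp only [pfin_mk, mem_insert, mem_singleton] at hv
    rcases hv with rfl | rfl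
    · exact hT x (Sym2.mem_mk_left x y)
    · exact hT y (Sym2.mem_mk_right x y)

lemma pair_eq_pair' {x y z w : γ} (h : ({x, y} : Finset γ) = {z, w}) :
    (x = z ∧ y = w) ∨ (x = w ∧ y = z) := by
  have hx : x = z ∨ x = w := by
    have : x ∈ ({z, w} : Finset γ) := h ▸ (by simp)
    simpa using this
  have hy : y = z ∨ y = w := by
    have : y ∈ ({z, w} : Finset γ) := h ▸ (by simp)
    simpa using this
  have hz : z = x ∨ z = y := by
    have : z ∈ ({x, y} : Finset γ) := h ▸ (by simp)
    simpa using this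
  have hw : w = x ∨ w = y := by
    have : w ∈ ({x, y} : Finset γ) := h ▸ (by simp)
    simpa using this
  rcases hx with hx | hx <;> rcases hy with hy | hy <;> rcases hz with hz | hz <;>
    rcases hw with hw | hw <;> subst_vars <;> tauto

lemma pfin_injective {g : α → γ} (hg : Function.Injective g) :
    Function.Injective (pfin g) := by
  intro e e' h
  induction e with
  | _ a b =>
    induction e' with
    | _ c d =>
      simp only [pfin_mk] at h
      rcases pair_eq_pair' h with ⟨h1, h2⟩ | ⟨h1, h2⟩
      · rw [Sym2.eq_iff]; exact Or.inl ⟨hg h1, hg h2⟩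
      · rw [Sym2.eq_iff]; exact Or.inr ⟨hg h1, hg h2⟩

lemma pfin_card {g : α → γ} (hg : Function.Injective g) {a b : α} (hab : a ≠ b) :
    (pfin g s(a, b)).card = 2 := by
  rw [pfin_mk, Finset.card_pair (fun h => hab (hg h))]
end pfin

lemma mem_pfin_iff {α γ : Type*} [DecidableEq γ] (g : α → γ) {e : Sym2 α} {v : γ} :
    v ∈ pfin g e ↔ ∃ a ∈ e, g a = v := by
  induction e with
  | _ a b =>
    simp only [pfin_mk, Finset.mem_insert, Finset.mem_singleton, Sym2.mem_iff]
    constructor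
    · rintro (rfl | rfl)
      exacts [⟨a, Or.inl rfl, rfl⟩, ⟨b, Or.inr rfl, rfl⟩]
    · rintro ⟨c, (rfl | rfl), rfl⟩
      exacts [Or.inl rfl, Or.inr rfl]

lemma pfin_card_of_not_isDiag {α γ : Type*} [DecidableEq γ] {g : α → γ}
    (hg : Function.Injective g) {e : Sym2 α} (he : ¬ e.IsDiag) : (pfin g e).card = 2 := by
  induction e with
  | _ a b =>
    have hab : a ≠ b := by simpa using he
    exact pfin_card hg hab


lemma ite1_injOn {β γ : Type*} [DecidableEq β] (g : β → γ) (p : β) (c : γ) (E : Set β)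
    (hg : ∀ v ∈ E, ∀ w ∈ E, v ≠ p → w ≠ p → g v = g w → v = w)
    (hc : ∀ v ∈ E, v ≠ p → c ≠ g v) :
    ∀ v ∈ E, ∀ w ∈ E,
      (if v = p then c else g v) = (if w = p then c else g w) → v = w := by
  intro v hv w hw h
  by_cases hvp : v = p <;> by_cases hwp : w = p <;>
    simp only [hvp, hwp, if_true, if_false, eq_self_iff_true, if_neg, if_pos,
      not_false_iff] at h ⊢ <;>
    first
    | rfl
    | exact absurd h (hc w hw hwp)
    | exact absurd h.symm (hc v hv hvp)
    | exact hg v hv w hw hvp hwp h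

lemma ite2_injOn {β γ : Type*} [DecidableEq β] (g : β → γ) (p q : β) (c d : γ) (E : Set β)
    (hpq : p ≠ q) (hcd : c ≠ d)
    (hg : ∀ v ∈ E, ∀ w ∈ E, v ≠ p → v ≠ q → w ≠ p → w ≠ q → g v = g w → v = w)
    (hc : ∀ v ∈ E, v ≠ p → v ≠ q → c ≠ g v)
    (hd : ∀ v ∈ E, v ≠ p → v ≠ q → d ≠ g v) :
    ∀ v ∈ E, ∀ w ∈ E,
      (if v = p then c else if v = q then d else g v) =
        (if w = p then c else if w = q then d else g w) → v = w := by
  intro v hv w hw h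
  by_cases hvp : v = p <;> by_cases hvq : v = q <;> by_cases hwp : w = p <;>
    by_cases hwq : w = q <;>
    simp only [hvp, hvq, hwp, hwq, hpq, hpq.symm, if_true, if_false, eq_self_iff_true,
      if_neg, if_pos, not_false_iff] at h ⊢ <;>
    first
    | rfl
    | exact absurd (hvp ▸ hvq : (p : β) = q) hpq
    | exact absurd (hwp ▸ hwq : (p : β) = q) hpq
    | exact absurd h hcd
    | exact absurd h.symm hcd
    | exact absurd h (hc w hw hwp hwq)
    | exact absurd h.symm (hc v hv hvp hvq)
    | exact absurd h (hd w hw hwp hwq)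
    | exact absurd h.symm (hd v hv hvp hvq)
    | exact hg v hv w hw hvp hvq hwp hwq h


variable {α : Type*} [Fintype α] [DecidableEq α] {F : SimpleGraph α} [DecidableRel F.Adj]

lemma only_nbr {u v : α} (hadj : F.Adj u v) (hd : F.degree u = 1) :
    ∀ z, F.Adj u z → z = v := by
  intro z hz
  have h1 : v ∈ F.neighborFinset u := (F.mem_neighborFinset u v).mpr hadj
  have h2 : z ∈ F.neighborFinset u := (F.mem_neighborFinset u z).mpr hz
  have := Finset.card_le_one.mp (le_of_eq hd) z h2 v h1
  exact this

lemma edge_avoid {u₁ u₂ : α} (hadj : F.Adj u₁ u₂) (hd₁ : F.degree u₁ = 1)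
    (hd₂ : F.degree u₂ = 1) {e : Sym2 α} (he : e ∈ F.edgeSet) (hne : e ≠ s(u₁, u₂)) :
    ∀ a ∈ e, a ≠ u₁ ∧ a ≠ u₂ := by
  have hnb₁ : ∀ z, F.Adj u₁ z → z = u₂ := only_nbr hadj hd₁
  have hnb₂ : ∀ z, F.Adj u₂ z → z = u₁ := only_nbr hadj.symm hd₂
  induction e with
  | _ x y =>
    have hxy : F.Adj x y := he
    intro a ha
    rcases Sym2.mem_iff.mp ha with rfl | rfl
    · constructor
      · rintro rfl
        exact hne (by rw [hnb₁ y hxy])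
      · rintro rfl
        rw [hnb₂ y hxy] at hne
        exact hne (Sym2.eq_swap)
    · constructor
      · rintro rfl
        rw [hnb₁ x hxy.symm] at hne
        exact hne (Sym2.eq_swap)
      · rintro rfl
        exact hne (by rw [hnb₂ x hxy.symm])


section free
variable {α : Type*} [Fintype α] [DecidableEq α] (F : SimpleGraph α) [DecidableRel F.Adj]

lemma free_of_card_lt {n : ℕ} {H : Finset (Finset (Fin n))}
    (hlt : H.card < F.edgeFinset.card) : ¬ F.IsBergeCopyIn H := by
  rintro ⟨φ, f, hφ, hinj, hmem⟩
  have : F.edgeFinset.card ≤ H.card := by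
    apply Finset.card_le_card_of_injOn f
    · intro e he
      exact (hmem e (SimpleGraph.mem_edgeFinset.mp he)).1
    · intro e he e' he' h
      exact hinj (SimpleGraph.mem_edgeFinset.mp (mem_coe.mp he))
        (SimpleGraph.mem_edgeFinset.mp (mem_coe.mp he')) h
  omega

lemma free_of_support {n : ℕ} {H : Finset (Finset (Fin n))} (T : Finset (Fin n))
    (hsub : ∀ h ∈ H, h ⊆ T) (hT : T.card < Fintype.card α)
    (hdeg : ∀ x : α, 0 < F.degree x) : ¬ F.IsBergeCopyIn H := by
  rintro ⟨φ, f, hφ, -, hmem⟩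
  have hmaps : ∀ a : α, φ a ∈ T := by
    intro a
    obtain ⟨b, hb⟩ := (F.degree_pos_iff_exists_adj a).mp (hdeg a)
    have he : s(a, b) ∈ F.edgeSet := hb
    exact hsub _ (hmem _ he).1 ((hmem _ he).2 a (Sym2.mem_mk_left a b))
  have : Fintype.card α ≤ T.card := by
    rw [← Finset.card_univ]
    exact Finset.card_le_card_of_injOn φ (fun a _ => hmaps a) (fun a _ b _ h => hφ h)
  omega

lemma exists_saturated (hne : F.edgeFinset.Nonempty) (r n : ℕ) :
    ∃ H : Finset (Finset (Fin n)), BergeSaturated F r n H := by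
  classical
  set s : Finset (Finset (Finset (Fin n))) :=
    univ.filter (fun H => (∀ h ∈ H, h.card = r) ∧ ¬ F.IsBergeCopyIn H) with hs
  have h0 : (∅ : Finset (Finset (Fin n))) ∈ s := by
    rw [hs, mem_filter]
    refine ⟨mem_univ _, fun h hh => absurd hh (by simp), free_of_card_lt F ?_⟩
    simpa using Finset.card_pos.mpr hne
  obtain ⟨H, hHs, hmax⟩ := s.exists_max_image Finset.card ⟨∅, h0⟩
  rw [hs, mem_filter] at hHs
  refine ⟨H, hHs.2.1, hHs.2.2, fun h hcard hnm => ?_⟩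
  by_contra hno
  have hmem : insert h H ∈ s := by
    rw [hs, mem_filter]
    refine ⟨mem_univ _, fun g hg => ?_, hno⟩
    rcases Finset.mem_insert.mp hg with rfl | hg
    · exact hcard
    · exact hHs.2.1 g hg
  have := hmax _ hmem
  rw [Finset.card_insert_of_notMem hnm] at this
  omega
end free

lemma consS {α : Type*} [Fintype α] [DecidableEq α] (F : SimpleGraph α) [DecidableRel F.Adj]
    {u₁ u₂ : α} (hadj : F.Adj u₁ u₂) (hd₁ : F.degree u₁ = 1) (hd₂ : F.degree u₂ = 1)
    {r n : ℕ} (hr : 4 ≤ r) (hn : Fintype.card α + r ≤ n) :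
    ∃ H : Finset (Finset (Fin n)), BergeSaturated F r n H ∧ H.card ≤ F.edgeFinset.card := by
  classical
  obtain ⟨ε⟩ : Nonempty (α ⊕ Fin (r - 2) ↪ Fin n) := by
    apply Function.Embedding.nonempty_of_card_le
    simp only [Fintype.card_sum, Fintype.card_fin]
    omega
  set ι : α → Fin n := fun a => ε (Sum.inl a) with hιdef
  have hιinj : Function.Injective ι := fun a b h => Sum.inl.inj (ε.injective h)
  set σk : Fin (r - 2) → Fin n := fun i => ε (Sum.inr i) with hσdef
  have hσinj : Function.Injective σk := fun i j h => Sum.inr.inj (ε.injective h)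
  have hισ : ∀ (a : α) (i : Fin (r - 2)), ι a ≠ σk i := by
    intro a i h
    exact absurd (ε.injective h) (by simp)
  set SS : Finset (Fin n) := (Finset.univ : Finset (Fin (r - 2))).image σk with hSSdef
  have hSScard : SS.card = r - 2 := by
    rw [hSSdef, Finset.card_image_of_injective _ hσinj, card_univ, Fintype.card_fin]
  have hιSS : ∀ a : α, ι a ∉ SS := by
    intro a ha
    obtain ⟨i, -, hi⟩ := Finset.mem_image.mp ha
    exact hισ a i hi.symm
  set B : Sym2 α → Finset (Fin n) := fun e => pfin ι e ∪ SS with hBdef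
  have hdisj : ∀ e : Sym2 α, Disjoint (pfin ι e) SS := by
    intro e
    rw [Finset.disjoint_left]
    intro v hv hv'
    obtain ⟨a, -, rfl⟩ := (mem_pfin_iff ι).mp hv
    exact hιSS a hv'
  have hBinj : Function.Injective B := by
    intro e e' h
    apply pfin_injective hιinj
    have h1 : ∀ e₀ : Sym2 α, pfin ι e₀ = (B e₀) \ SS := by
      intro e₀
      rw [hBdef]
      exact (Finset.union_sdiff_cancel_right (hdisj e₀)).symm
    rw [h1, h1, h]
  set iso : Sym2 α := s(u₁, u₂) with hisodef
  have hisoE : iso ∈ F.edgeFinset := SimpleGraph.mem_edgeFinset.mpr hadj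
  set E' : Finset (Sym2 α) := F.edgeFinset.erase iso with hE'def
  set H : Finset (Finset (Fin n)) := E'.image B with hHdef
  set A' : Finset α := Finset.univ \ {u₁, u₂} with hA'def
  set P : Finset (Fin n) := A'.image ι with hPdef
  have hPmem : ∀ v : α, v ≠ u₁ → v ≠ u₂ → ι v ∈ P := by
    intro v h1 h2
    exact Finset.mem_image_of_mem ι (by simp [hA'def, h1, h2])
  have havoid : ∀ e ∈ E', ∀ a ∈ e, a ≠ u₁ ∧ a ≠ u₂ := by
    intro e he
    have h1 := Finset.mem_erase.mp he
    exact edge_avoid hadj hd₁ hd₂ (SimpleGraph.mem_edgeFinset.mp h1.2) h1.1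
  have hediag : ∀ e ∈ E', ¬ e.IsDiag := fun e he =>
    F.not_isDiag_of_mem_edgeSet (SimpleGraph.mem_edgeFinset.mp (Finset.mem_erase.mp he).2)
  have hBcard : ∀ e ∈ E', (B e).card = r := by
    intro e he
    have h2 : (pfin ι e).card = 2 := pfin_card_of_not_isDiag hιinj (hediag e he)
    rw [hBdef]
    rw [Finset.card_union_of_disjoint (hdisj e), h2, hSScard]
    omega
  have hpfinB : ∀ (e : Sym2 α) (v : Fin n), v ∈ pfin ι e → v ∈ B e := by
    intro e v hv
    rw [hBdef]
    exact Finset.mem_union_left _ hv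
  have hSSB : ∀ (e : Sym2 α) (v : Fin n), v ∈ SS → v ∈ B e := by
    intro e v hv
    rw [hBdef]
    exact Finset.mem_union_right _ hv
  have hBmemH : ∀ e ∈ E', B e ∈ H := fun e he => Finset.mem_image_of_mem B he
  have hHcard : H.card ≤ E'.card := Finset.card_image_le
  have hE'lt : E'.card < F.edgeFinset.card := Finset.card_erase_lt_of_mem hisoE
  refine ⟨H, ⟨?_, ?_, ?_⟩, le_trans hHcard (le_of_lt hE'lt)⟩
  · intro h hh
    obtain ⟨e, he, rfl⟩ := Finset.mem_image.mp hh
    exact hBcard e he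
  · exact free_of_card_lt F (lt_of_le_of_lt hHcard hE'lt)
  · intro h hcard hnm
    have hmemE' : ∀ e ∈ F.edgeSet, e ≠ iso → e ∈ E' :=
      fun e he h1 => Finset.mem_erase.mpr ⟨h1, SimpleGraph.mem_edgeFinset.mpr he⟩
    set f : Sym2 α → Finset (Fin n) := fun e => if e = iso then h else B e with hfdef
    have hfval : ∀ e : Sym2 α, e ≠ iso → f e = B e := by
      intro e h1
      rw [hfdef]
      simp [h1]
    have hfiso : f iso = h := by rw [hfdef]; simp
    have hfinj : Set.InjOn f F.edgeSet := by
      intro e he e' he' hfe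
      by_cases h1 : e = iso <;> by_cases h2 : e' = iso
      · rw [h1, h2]
      · rw [h1, hfiso, hfval e' h2] at hfe
        exact absurd (hfe ▸ hBmemH e' (hmemE' e' he' h2)) hnm
      · rw [h2, hfiso, hfval e h1] at hfe
        exact absurd (hfe ▸ hBmemH e (hmemE' e he h1)) hnm
      · rw [hfval e h1, hfval e' h2] at hfe
        exact hBinj hfe
    have hfmem : ∀ e ∈ F.edgeSet, f e ∈ insert h H := by
      intro e he
      by_cases h1 : e = iso
      · rw [h1, hfiso]; exact Finset.mem_insert_self _ _
      · rw [hfval e h1]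
        exact Finset.mem_insert_of_mem (hBmemH e (hmemE' e he h1))
    by_cases hc : 2 ≤ (h \ P).card
    · obtain ⟨a, ha, b, hb, hab⟩ := Finset.one_lt_card.mp hc
      have haP : a ∉ P := (Finset.mem_sdiff.mp ha).2
      have hbP : b ∉ P := (Finset.mem_sdiff.mp hb).2
      have hah : a ∈ h := (Finset.mem_sdiff.mp ha).1
      have hbh : b ∈ h := (Finset.mem_sdiff.mp hb).1
      refine ⟨fun v => if v = u₁ then a else if v = u₂ then b else ι v, f, ?_, hfinj, ?_⟩
      · intro v w hvw
        exact ite2_injOn ι u₁ u₂ a b Set.univ hadj.ne hab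
          (fun v _ w _ _ _ _ _ h' => hιinj h')
          (fun v _ h1 h2 he => haP (he ▸ hPmem v h1 h2))
          (fun v _ h1 h2 he => hbP (he ▸ hPmem v h1 h2))
          v trivial w trivial hvw
      · intro e he
        refine ⟨hfmem e he, ?_⟩
        intro v hv
        by_cases h1 : e = iso
        · subst h1
          rw [hfiso]
          rcases Sym2.mem_iff.mp hv with hv' | hv'
          · simp only [hv', if_pos rfl]
            exact hah
          · simp only [hv', if_neg (Ne.symm hadj.ne), if_pos rfl]
            exact hbh
        · obtain ⟨hv1, hv2⟩ := havoid e (hmemE' e he h1) v hv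
          rw [hfval e h1]
          simp only [if_neg hv1, if_neg hv2]
          exact hpfinB e _ (mem_pfin ι hv)
    · have hcard2 : 2 ≤ (h ∩ P).card := by
        have h1 := Finset.card_inter_add_card_sdiff h P
        omega
      obtain ⟨a, ha, b, hb, hab⟩ := Finset.one_lt_card.mp hcard2
      obtain ⟨x, hx, hxa⟩ := Finset.mem_image.mp (Finset.mem_inter.mp ha).2
      obtain ⟨y, hy, hyb⟩ := Finset.mem_image.mp (Finset.mem_inter.mp hb).2
      have hah : a ∈ h := (Finset.mem_inter.mp ha).1
      have hbh : b ∈ h := (Finset.mem_inter.mp hb).1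
      have hxy : x ≠ y := by
        rintro rfl
        exact hab (hxa ▸ hyb)
      have hxu : x ≠ u₁ ∧ x ≠ u₂ := by
        have := Finset.mem_sdiff.mp (hA'def ▸ hx)
        simpa using this.2
      have hyu : y ≠ u₁ ∧ y ≠ u₂ := by
        have := Finset.mem_sdiff.mp (hA'def ▸ hy)
        simpa using this.2
      have h02 : (0 : ℕ) < r - 2 := by omega
      have h12 : (1 : ℕ) < r - 2 := by omega
      have hσ01 : σk ⟨0, h02⟩ ≠ σk ⟨1, h12⟩ := by
        intro h'
        simpa using hσinj h'
      have hσSS : ∀ i : Fin (r - 2), σk i ∈ SS := by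
        intro i
        rw [hSSdef]
        exact Finset.mem_image_of_mem σk (Finset.mem_univ i)
      set g' : α → Fin n := fun v => if v = u₁ then a else if v = u₂ then b else ι v
        with hg'def
      have hg'inj : ∀ v w : α, v ≠ x → v ≠ y → w ≠ x → w ≠ y → g' v = g' w → v = w := by
        intro v w hvx hvy hwx hwy h'
        refine ite2_injOn ι u₁ u₂ a b {v : α | v ≠ x ∧ v ≠ y} hadj.ne hab
          (fun v _ w _ _ _ _ _ h'' => hιinj h'')
          ?_ ?_ v ⟨hvx, hvy⟩ w ⟨hwx, hwy⟩ h'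
        · intro v hv _ _ he
          exact hv.1 (hιinj (hxa ▸ he : ι x = ι v)).symm
        · intro v hv _ _ he
          exact hv.2 (hιinj (hyb ▸ he : ι y = ι v)).symm
      have hg'val : ∀ v : α, v ≠ u₁ → v ≠ u₂ → g' v = ι v := by
        intro v h1 h2
        rw [hg'def]
        simp [h1, h2]
      have hg'u₁ : g' u₁ = a := by rw [hg'def]; simp
      have hg'u₂ : g' u₂ = b := by
        rw [hg'def]
        simp [Ne.symm hadj.ne]
      have hσP' : ∀ (i : Fin (r - 2)) (v : α), σk i ≠ g' v := by
        intro i v h'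
        by_cases h1 : v = u₁
        · rw [h1, hg'u₁] at h'
          exact hισ x i (hxa ▸ h'.symm : ι x = σk i)
        · by_cases h2 : v = u₂
          · rw [h2, hg'u₂] at h'
            exact hισ y i (hyb ▸ h'.symm : ι y = σk i)
          · rw [hg'val v h1 h2] at h'
            exact hισ v i h'.symm
      refine ⟨fun v => if v = x then σk ⟨0, h02⟩ else if v = y then σk ⟨1, h12⟩ else g' v,
        f, ?_, hfinj, ?_⟩
      · intro v w hvw
        exact ite2_injOn g' x y (σk ⟨0, h02⟩) (σk ⟨1, h12⟩) Set.univ hxy hσ01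
          (fun v _ w _ hvx hvy hwx hwy h' => hg'inj v w hvx hvy hwx hwy h')
          (fun v _ _ _ => hσP' _ v)
          (fun v _ _ _ => hσP' _ v)
          v trivial w trivial hvw
      · intro e he
        refine ⟨hfmem e he, ?_⟩
        intro v hv
        by_cases h1 : e = iso
        · subst h1
          rw [hfiso]
          rcases Sym2.mem_iff.mp hv with hv' | hv'
          · simp only [hv', if_neg (Ne.symm hxu.1), if_neg (Ne.symm hyu.1), hg'u₁]
            exact hah
          · simp only [hv', if_neg (Ne.symm hxu.2), if_neg (Ne.symm hyu.2), hg'u₂]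
            exact hbh
        · obtain ⟨hv1, hv2⟩ := havoid e (hmemE' e he h1) v hv
          rw [hfval e h1]
          by_cases h2 : v = x
          · simp only [if_pos h2]
            exact hSSB e _ (hσSS _)
          · by_cases h3 : v = y
            · simp only [if_neg h2, if_pos h3]
              exact hSSB e _ (hσSS _)
            · simp only [if_neg h2, if_neg h3, hg'val v hv1 hv2]
              exact hpfinB e _ (mem_pfin ι hv)

lemma consT {α : Type*} [Fintype α] [DecidableEq α] (F : SimpleGraph α) [DecidableRel F.Adj]
    {u₁ u₂ : α} (hadj : F.Adj u₁ u₂) (hd₁ : F.degree u₁ = 1) (hd₂ : F.degree u₂ = 1)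
    (hnoiso : ∀ x : α, 0 < F.degree x)
    {n : ℕ} (hn : Fintype.card α ≤ n) :
    ∃ H : Finset (Finset (Fin n)), BergeSaturated F 3 n H ∧ H.card ≤ 2 ^ Fintype.card α := by
  classical
  obtain ⟨ε⟩ : Nonempty (α ↪ Fin n) :=
    Function.Embedding.nonempty_of_card_le (by simpa using hn)
  set ι : α → Fin n := fun a => ε a with hιdef
  have hιinj : Function.Injective ι := fun a b h => ε.injective h
  set T : Finset (Fin n) := (Finset.univ.erase u₁).image ι with hTdef
  set H : Finset (Finset (Fin n)) := T.powersetCard 3 with hHdef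
  have hmemT : ∀ v : α, v ≠ u₁ → ι v ∈ T := fun v hv =>
    Finset.mem_image_of_mem ι (Finset.mem_erase.mpr ⟨hv, Finset.mem_univ _⟩)
  have hTcard : T.card = Fintype.card α - 1 := by
    rw [hTdef, Finset.card_image_of_injective _ hιinj,
      Finset.card_erase_of_mem (Finset.mem_univ _), Finset.card_univ]
  have hcardpos : 0 < Fintype.card α := Fintype.card_pos_iff.mpr ⟨u₁⟩
  have hu2T : ι u₂ ∈ T := hmemT u₂ (Ne.symm hadj.ne)
  set iso : Sym2 α := s(u₁, u₂) with hisodef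
  set E' : Finset (Sym2 α) := F.edgeFinset.erase iso with hE'def
  set A' : Finset α := Finset.univ \ {u₁, u₂} with hA'def
  set P : Finset (Fin n) := A'.image ι with hPdef
  have hPmem : ∀ v : α, v ≠ u₁ → v ≠ u₂ → ι v ∈ P := by
    intro v h1 h2
    exact Finset.mem_image_of_mem ι (by simp [hA'def, h1, h2])
  have hPT : P ⊆ T := by
    intro v hv
    obtain ⟨a, ha, rfl⟩ := Finset.mem_image.mp hv
    have ha' := Finset.mem_sdiff.mp (hA'def ▸ ha)
    have : a ≠ u₁ := by
      intro h'
      exact ha'.2 (by simp [h'])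
    exact hmemT a this
  have havoid : ∀ e ∈ E', ∀ a ∈ e, a ≠ u₁ ∧ a ≠ u₂ := by
    intro e he
    have h1 := Finset.mem_erase.mp he
    exact edge_avoid hadj hd₁ hd₂ (SimpleGraph.mem_edgeFinset.mp h1.2) h1.1
  have hediag : ∀ e ∈ E', ¬ e.IsDiag := fun e he =>
    F.not_isDiag_of_mem_edgeSet (SimpleGraph.mem_edgeFinset.mp (Finset.mem_erase.mp he).2)
  have hmemE' : ∀ e ∈ F.edgeSet, e ≠ iso → e ∈ E' :=
    fun e he h1 => Finset.mem_erase.mpr ⟨h1, SimpleGraph.mem_edgeFinset.mpr he⟩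
  refine ⟨H, ⟨?_, ?_, ?_⟩, ?_⟩
  · exact fun h hh => (Finset.mem_powersetCard.mp hh).2
  · exact free_of_support F T (fun h hh => (Finset.mem_powersetCard.mp hh).1)
      (by omega) hnoiso
  · -- saturation
    intro h hcard hnm
    have hnsub : ¬ h ⊆ T := fun hsub => hnm (Finset.mem_powersetCard.mpr ⟨hsub, hcard⟩)
    obtain ⟨z, hzh, hzT⟩ := Finset.not_subset.mp hnsub
    have herase : (h.erase z).Nonempty := by
      rw [← Finset.card_pos, Finset.card_erase_of_mem hzh, hcard]
      omega
    obtain ⟨b₀, hb₀⟩ := herase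
    have hb₀h : b₀ ∈ h := Finset.mem_of_mem_erase hb₀
    have hb₀z : b₀ ≠ z := Finset.ne_of_mem_erase hb₀
    have hzιT : ∀ v : α, v ≠ u₁ → z ≠ ι v := fun v hv h' => hzT (h' ▸ hmemT v hv)
    by_cases hbP : b₀ ∈ P
    · -- case (ii) : b₀ = ι x with x ∈ A'
      obtain ⟨x, hx, hxb⟩ := Finset.mem_image.mp hbP
      have hxu : x ≠ u₁ ∧ x ≠ u₂ := by
        have := Finset.mem_sdiff.mp (hA'def ▸ hx)
        simpa using this.2
      set φ : α → Fin n :=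
        fun v => if v = x then ι u₂ else if v = u₁ then z else if v = u₂ then ι x else ι v
        with hφdef
      have hφx : φ x = ι u₂ := by rw [hφdef]; simp
      have hφu₁ : φ u₁ = z := by
        rw [hφdef]; simp [Ne.symm hxu.1, Ne.symm hadj.ne, hadj.ne]
      have hφu₂ : φ u₂ = ι x := by
        rw [hφdef]; simp [Ne.symm hxu.2, Ne.symm hadj.ne]
      have hφval : ∀ v : α, v ≠ x → v ≠ u₁ → v ≠ u₂ → φ v = ι v := by
        intro v h1 h2 h3
        rw [hφdef]; simp [h1, h2, h3]
      have hφinj : Function.Injective φ := by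
        intro v w hvw
        rw [hφdef] at hvw
        refine ite2_injOn (fun v => if v = u₂ then ι x else ι v) x u₁ (ι u₂) z Set.univ
          hxu.1 (fun h' => hzT (h' ▸ hu2T)) ?_ ?_ ?_ v trivial w trivial hvw
        · intro v _ w _ hvx _ hwx _ h'
          exact ite1_injOn ι u₂ (ι x) {v : α | v ≠ x}
            (fun v _ w _ _ _ h'' => hιinj h'')
            (fun v hv _ h'' => hv (hιinj h'').symm)
            v hvx w hwx h'
        · intro v _ hvx _ h'
          by_cases h2 : v = u₂
          · simp only [if_pos h2] at h'
            exact hxu.2 (hιinj h').symm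
          · simp only [if_neg h2] at h'
            exact h2 (hιinj h').symm
        · intro v _ hvx hvu h'
          by_cases h2 : v = u₂
          · simp only [if_pos h2] at h'
            exact hzιT x hxu.1 h'
          · simp only [if_neg h2] at h'
            exact hzιT v hvu h'
      set f : Sym2 α → Finset (Fin n) :=
        fun e => if e = iso then h else pfin φ e ∪ {ι x} with hfdef
      have hfval : ∀ e : Sym2 α, e ≠ iso → f e = pfin φ e ∪ {ι x} := by
        intro e h1; rw [hfdef]; simp [h1]
      have hfiso : f iso = h := by rw [hfdef]; simp
      have hφT : ∀ e ∈ E', ∀ a ∈ e, φ a ∈ T := by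
        intro e he a ha
        obtain ⟨ha1, ha2⟩ := havoid e he a ha
        by_cases h2 : a = x
        · rw [h2, hφx]; exact hu2T
        · rw [hφval a h2 ha1 ha2]; exact hmemT a ha1
      have hιxpfin : ∀ e ∈ E', ι x ∉ pfin φ e := by
        intro e he hmem
        obtain ⟨a, ha, ha'⟩ := (mem_pfin_iff φ).mp hmem
        obtain ⟨ha1, ha2⟩ := havoid e he a ha
        by_cases h2 : a = x
        · rw [h2, hφx] at ha'
          exact hxu.2 (hιinj ha').symm
        · rw [hφval a h2 ha1 ha2] at ha'
          exact h2 (hιinj ha')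
      have hfeH : ∀ e ∈ E', pfin φ e ∪ {ι x} ∈ H := by
        intro e he
        refine Finset.mem_powersetCard.mpr ⟨?_, ?_⟩
        · intro v hv
          rcases Finset.mem_union.mp hv with hv | hv
          · obtain ⟨a, ha, rfl⟩ := (mem_pfin_iff φ).mp hv
            exact hφT e he a ha
          · rw [Finset.mem_singleton.mp hv]
            exact hmemT x hxu.1
        · rw [Finset.card_union_of_disjoint (Finset.disjoint_singleton_right.mpr (hιxpfin e he)),
            pfin_card_of_not_isDiag hφinj (hediag e he), Finset.card_singleton]
      have hfinj : Set.InjOn f F.edgeSet := by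
        intro e he e' he' hfe
        by_cases h1 : e = iso <;> by_cases h2 : e' = iso
        · rw [h1, h2]
        · rw [h1, hfiso, hfval e' h2] at hfe
          exfalso
          refine hzT ?_
          have := hfe ▸ hzh
          rcases Finset.mem_union.mp this with hv | hv
          · obtain ⟨a, ha, hva⟩ := (mem_pfin_iff φ).mp hv
            exact hva ▸ hφT e' (hmemE' e' he' h2) a ha
          · rw [Finset.mem_singleton.mp hv]
            exact hmemT x hxu.1
        · rw [h2, hfiso, hfval e h1] at hfe
          exfalso
          refine hzT ?_
          have := hfe ▸ hzh
          rcases Finset.mem_union.mp this with hv | hv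
          · obtain ⟨a, ha, hva⟩ := (mem_pfin_iff φ).mp hv
            exact hva ▸ hφT e (hmemE' e he h1) a ha
          · rw [Finset.mem_singleton.mp hv]
            exact hmemT x hxu.1
        · rw [hfval e h1, hfval e' h2] at hfe
          apply pfin_injective hφinj
          have hstrip : ∀ e₀ ∈ E', pfin φ e₀ = (pfin φ e₀ ∪ {ι x}) \ {ι x} := fun e₀ he₀ =>
            (Finset.union_sdiff_cancel_right
              (Finset.disjoint_singleton_right.mpr (hιxpfin e₀ he₀))).symm
          rw [hstrip e (hmemE' e he h1), hstrip e' (hmemE' e' he' h2), hfe]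
      refine ⟨φ, f, hφinj, hfinj, ?_⟩
      intro e he
      constructor
      · by_cases h1 : e = iso
        · rw [h1, hfiso]; exact Finset.mem_insert_self _ _
        · rw [hfval e h1]
          exact Finset.mem_insert_of_mem (hfeH e (hmemE' e he h1))
      · intro a ha
        by_cases h1 : e = iso
        · subst h1
          rw [hfiso]
          rcases Sym2.mem_iff.mp ha with ha' | ha'
          · rw [ha', hφu₁]; exact hzh
          · rw [ha', hφu₂, hxb]; exact hb₀h
        · rw [hfval e h1]
          exact Finset.mem_union_left _ (mem_pfin φ ha)
    · -- case (i) : b₀ ∉ P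
      set φ : α → Fin n := fun v => if v = u₁ then z else if v = u₂ then b₀ else ι v with hφdef
      have hφu₁ : φ u₁ = z := by rw [hφdef]; simp
      have hφu₂ : φ u₂ = b₀ := by rw [hφdef]; simp [Ne.symm hadj.ne]
      have hφval : ∀ v : α, v ≠ u₁ → v ≠ u₂ → φ v = ι v := by
        intro v h1 h2
        rw [hφdef]; simp [h1, h2]
      have hφinj : Function.Injective φ := by
        intro v w hvw
        rw [hφdef] at hvw
        exact ite2_injOn ι u₁ u₂ z b₀ Set.univ hadj.ne (Ne.symm hb₀z)
          (fun v _ w _ _ _ _ _ h' => hιinj h')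
          (fun v _ h1 _ h' => hzιT v h1 h')
          (fun v _ h1 h2 h' => hbP (h' ▸ hPmem v h1 h2))
          v trivial w trivial hvw
      set f : Sym2 α → Finset (Fin n) :=
        fun e => if e = iso then h else pfin ι e ∪ {ι u₂} with hfdef
      have hfval : ∀ e : Sym2 α, e ≠ iso → f e = pfin ι e ∪ {ι u₂} := by
        intro e h1; rw [hfdef]; simp [h1]
      have hfiso : f iso = h := by rw [hfdef]; simp
      have hιT : ∀ e ∈ E', ∀ a ∈ e, ι a ∈ T := by
        intro e he a ha
        exact hmemT a (havoid e he a ha).1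
      have hu2pfin : ∀ e ∈ E', ι u₂ ∉ pfin ι e := by
        intro e he hmem
        obtain ⟨a, ha, ha'⟩ := (mem_pfin_iff ι).mp hmem
        exact (havoid e he a ha).2 (hιinj ha')
      have hfeH : ∀ e ∈ E', pfin ι e ∪ {ι u₂} ∈ H := by
        intro e he
        refine Finset.mem_powersetCard.mpr ⟨?_, ?_⟩
        · intro v hv
          rcases Finset.mem_union.mp hv with hv | hv
          · obtain ⟨a, ha, rfl⟩ := (mem_pfin_iff ι).mp hv
            exact hιT e he a ha
          · rw [Finset.mem_singleton.mp hv]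
            exact hu2T
        · rw [Finset.card_union_of_disjoint (Finset.disjoint_singleton_right.mpr (hu2pfin e he)),
            pfin_card_of_not_isDiag hιinj (hediag e he), Finset.card_singleton]
      have hfinj : Set.InjOn f F.edgeSet := by
        intro e he e' he' hfe
        by_cases h1 : e = iso <;> by_cases h2 : e' = iso
        · rw [h1, h2]
        · rw [h1, hfiso, hfval e' h2] at hfe
          exfalso
          refine hzT ?_
          have := hfe ▸ hzh
          rcases Finset.mem_union.mp this with hv | hv
          · obtain ⟨a, ha, hva⟩ := (mem_pfin_iff ι).mp hv
            exact hva ▸ hιT e' (hmemE' e' he' h2) a ha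
          · rw [Finset.mem_singleton.mp hv]
            exact hu2T
        · rw [h2, hfiso, hfval e h1] at hfe
          exfalso
          refine hzT ?_
          have := hfe ▸ hzh
          rcases Finset.mem_union.mp this with hv | hv
          · obtain ⟨a, ha, hva⟩ := (mem_pfin_iff ι).mp hv
            exact hva ▸ hιT e (hmemE' e he h1) a ha
          · rw [Finset.mem_singleton.mp hv]
            exact hu2T
        · rw [hfval e h1, hfval e' h2] at hfe
          apply pfin_injective hιinj
          have hstrip : ∀ e₀ ∈ E', pfin ι e₀ = (pfin ι e₀ ∪ {ι u₂}) \ {ι u₂} := fun e₀ he₀ =>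
            (Finset.union_sdiff_cancel_right
              (Finset.disjoint_singleton_right.mpr (hu2pfin e₀ he₀))).symm
          rw [hstrip e (hmemE' e he h1), hstrip e' (hmemE' e' he' h2), hfe]
      refine ⟨φ, f, hφinj, hfinj, ?_⟩
      intro e he
      constructor
      · by_cases h1 : e = iso
        · rw [h1, hfiso]; exact Finset.mem_insert_self _ _
        · rw [hfval e h1]
          exact Finset.mem_insert_of_mem (hfeH e (hmemE' e he h1))
      · intro a ha
        by_cases h1 : e = iso
        · subst h1
          rw [hfiso]
          rcases Sym2.mem_iff.mp ha with ha' | ha'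
          · rw [ha', hφu₁]; exact hzh
          · rw [ha', hφu₂]; exact hb₀h
        · rw [hfval e h1]
          obtain ⟨ha1, ha2⟩ := havoid e (hmemE' e he h1) a ha
          rw [hφval a ha1 ha2]
          exact Finset.mem_union_left _ (mem_pfin ι ha)
  · -- cardinality
    have hsub : H ⊆ T.powerset := by
      intro h hh
      exact Finset.mem_powerset.mpr (Finset.mem_powersetCard.mp hh).1
    calc H.card ≤ T.powerset.card := Finset.card_le_card hsub
      _ = 2 ^ T.card := Finset.card_powerset T
      _ ≤ 2 ^ Fintype.card α := Nat.pow_le_pow_right (by omega) (by omega)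


end BergeAux

/-- If `F` has no isolated vertices and contains an isolated edge, then for every `r ≥ 3`
there is a constant `C` with `sat_r(n, F) ≤ C·n` for all `n`: there is an `n`-vertex
`r`-uniform Berge-`F`-saturated hypergraph with at most `C·n` hyperedges. -/
theorem stmt1 {α : Type*} [Fintype α] (F : SimpleGraph α) [DecidableRel F.Adj]
    (hnoiso : ∀ x : α, 0 < F.degree x)
    (hisoedge : ∃ u₁ u₂ : α, F.Adj u₁ u₂ ∧ F.degree u₁ = 1 ∧ F.degree u₂ = 1)
    (r : ℕ) (hr : 3 ≤ r) :
    ∃ C : ℕ, ∀ n : ℕ, ∃ H : Finset (Finset (Fin n)),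
      BergeSaturated F r n H ∧ H.card ≤ C * n := by
  classical
  obtain ⟨u₁, u₂, hadj, hd₁, hd₂⟩ := hisoedge
  set m := Fintype.card α + r with hm
  set C := 2 ^ m + Fintype.card (Sym2 α) with hC
  refine ⟨C, fun n => ?_⟩
  by_cases hn : n < m
  · obtain ⟨H, hH⟩ := exists_saturated F ⟨s(u₁, u₂), SimpleGraph.mem_edgeFinset.mpr hadj⟩ r n
    refine ⟨H, hH, ?_⟩
    rcases Nat.eq_zero_or_pos n with h0 | h0
    · subst h0
      have hHe : H = ∅ := by
        rcases Finset.eq_empty_or_nonempty H with he | ⟨x, hx⟩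
        · exact he
        · exfalso
          have hc := hH.1 x hx
          have hx0 : x.card ≤ 0 := by
            have := Finset.card_le_univ x
            simpa using this
          omega
      simp [hHe]
    · have h1 : H.card ≤ 2 ^ n := by
        have h2 := Finset.card_le_univ H
        calc H.card ≤ Fintype.card (Finset (Fin n)) := by simpa using h2
          _ = 2 ^ n := by simp
      calc H.card ≤ 2 ^ n := h1
        _ ≤ 2 ^ m := Nat.pow_le_pow_right (by omega) (by omega)
        _ ≤ C * 1 := by rw [hC, Nat.mul_one]; exact Nat.le_add_right _ _
        _ ≤ C * n := Nat.mul_le_mul_left _ h0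
  · push_neg at hn
    have hn' : Fintype.card α + r ≤ n := by
      have h2 := hn
      rw [hm] at h2
      exact h2
    have hn1 : 1 ≤ n := by omega
    rcases eq_or_lt_of_le hr with hr3 | hr4
    · obtain ⟨H, hH, hcard⟩ := consT F hadj hd₁ hd₂ hnoiso (n := n) (by omega)
      refine ⟨H, hr3 ▸ hH, ?_⟩
      calc H.card ≤ 2 ^ Fintype.card α := hcard
        _ ≤ 2 ^ m := Nat.pow_le_pow_right (by omega) (by rw [hm]; omega)
        _ ≤ C * 1 := by rw [hC, Nat.mul_one]; exact Nat.le_add_right _ _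
        _ ≤ C * n := Nat.mul_le_mul_left _ hn1
    · obtain ⟨H, hH, hcard⟩ := consS F hadj hd₁ hd₂ (r := r) (n := n) (by omega) (by omega)
      refine ⟨H, hH, ?_⟩
      have hEcard : F.edgeFinset.card ≤ Fintype.card (Sym2 α) := by
        simpa using Finset.card_le_univ F.edgeFinset
      calc H.card ≤ F.edgeFinset.card := hcard
        _ ≤ Fintype.card (Sym2 α) := hEcard
        _ ≤ C * 1 := by rw [hC, Nat.mul_one]; exact Nat.le_add_left _ _
        _ ≤ C * n := Nat.mul_le_mul_left _ hn1
end

section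
/- Let r, s ≥ 2, let 1 ≤ k₁ ≤ … ≤ k_{s+1} with r ≤ k₁+…+k_{s+1} − 3, and set N = k₁+…+k_s − 1. Partition [n] into sets C, B₁, …, B_m, R with |C| = N, |B_i| = k_{s+1} for all i, and |R| < k_{s+1}. Then the r-uniform hypergraph G consisting of all r-subsets A of [n] such that A ⊆ C ∪ B_i for some i is Berge-K_{k₁,…,k_{s+1}}-free. -/
/-- Case I construction of Theorem 2: with `r ≤ k₁+…+k_{s+1} − 3` and the described
partition `[n] = C ∪ B₁ ∪ … ∪ B_m ∪ R`, the family of all `r`-subsets contained in some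
`C ∪ B_i` is Berge-free for the complete multipartite graph `K_{k₁,…,k_{s+1}}`. -/
theorem stmt5 (r s : ℕ) (hr : 2 ≤ r) (hs : 2 ≤ s) (k : Fin (s + 1) → ℕ)
    (hk1 : 1 ≤ k 0) (hmono : Monotone k)
    (hrk : r ≤ (∑ i, k i) - 3)
    (n m : ℕ) (C R : Finset (Fin n)) (B : Fin m → Finset (Fin n))
    (hC : C.card = (∑ i : Fin s, k i.castSucc) - 1)
    (hB : ∀ i, (B i).card = k (Fin.last s))
    (hR : R.card < k (Fin.last s))
    (hCB : ∀ i, Disjoint C (B i)) (hCR : Disjoint C R)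
    (hBR : ∀ i, Disjoint (B i) R)
    (hBB : ∀ i j, i ≠ j → Disjoint (B i) (B j))
    (hcover : C ∪ R ∪ Finset.univ.biUnion B = Finset.univ) :
    ¬ (SimpleGraph.completeMultipartiteGraph fun i => Fin (k i)).IsBergeCopyIn
        (Finset.univ.filter fun A : Finset (Fin n) =>
          A.card = r ∧ ∃ i, A ⊆ C ∪ B i) := by
  classical
  rintro ⟨φ, f, hφ, hfinj, hf⟩
  have hki : ∀ i, 1 ≤ k i := fun i => hk1.trans (hmono (Fin.zero_le i))
  haveI : Nontrivial (Fin (s + 1)) := Fin.nontrivial_iff_two_le.mpr (by omega)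
  -- every vertex image lands in C ∪ B i for some i
  have hvert : ∀ v : (i : Fin (s + 1)) × Fin (k i), ∃ i, φ v ∈ C ∪ B i := by
    intro v
    obtain ⟨q, hq⟩ := exists_ne v.1
    have hadj : (SimpleGraph.completeMultipartiteGraph fun i => Fin (k i)).Adj v ⟨q, ⟨0, hki q⟩⟩ :=
      hq.symm
    have he : s(v, (⟨q, ⟨0, hki q⟩⟩ : (i : Fin (s + 1)) × Fin (k i))) ∈
        (SimpleGraph.completeMultipartiteGraph fun i => Fin (k i)).edgeSet := hadj
    obtain ⟨hmem, hall⟩ := hf _ he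
    rw [Finset.mem_filter] at hmem
    obtain ⟨-, -, i, hi⟩ := hmem
    exact ⟨i, hi (hall v (Sym2.mem_mk_left _ _))⟩
  -- key: two vertices landing in different B's must be in the same part
  have key : ∀ (u w : (i : Fin (s + 1)) × Fin (k i)) (a b : Fin m),
      φ u ∈ B a → φ w ∈ B b → a ≠ b → u.1 = w.1 := by
    intro u w a b hu hw hab
    by_contra hne
    have he : s(u, w) ∈
        (SimpleGraph.completeMultipartiteGraph fun i => Fin (k i)).edgeSet := hne
    obtain ⟨hmem, hall⟩ := hf _ he
    rw [Finset.mem_filter] at hmem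
    obtain ⟨-, -, l, hl⟩ := hmem
    have h1 : φ u ∈ C ∪ B l := hl (hall u (Sym2.mem_mk_left _ _))
    have h2 : φ w ∈ C ∪ B l := hl (hall w (Sym2.mem_mk_right _ _))
    have ha : a = l := by
      rcases Finset.mem_union.mp h1 with h | h
      · exact absurd (Finset.disjoint_left.mp (hCB a) h) (by simp [hu])
      · by_contra hal
        exact Finset.disjoint_left.mp (hBB a l hal) hu h
    have hb : b = l := by
      rcases Finset.mem_union.mp h2 with h | h
      · exact absurd (Finset.disjoint_left.mp (hCB b) h) (by simp [hw])
      · by_contra hbl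
        exact Finset.disjoint_left.mp (hBB b l hbl) hw h
    exact hab (ha.trans hb.symm)
  -- the set of vertices mapped outside C
  set O : Finset ((i : Fin (s + 1)) × Fin (k i)) :=
    Finset.univ.filter (fun v => φ v ∉ C) with hO_def
  have hOB : ∀ v ∈ O, ∃ i, φ v ∈ B i := by
    intro v hv
    obtain ⟨i, hi⟩ := hvert v
    rcases Finset.mem_union.mp hi with h | h
    · exact absurd h (Finset.mem_filter.mp hv).2
    · exact ⟨i, h⟩
  -- counting: O has more than k (last s) elements
  have hS : 1 ≤ ∑ i : Fin s, k i.castSucc := by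
    haveI : NeZero s := ⟨by omega⟩
    have : 0 < ∑ i : Fin s, k i.castSucc :=
      Finset.sum_pos (fun i _ => hki _) Finset.univ_nonempty
    omega
  have hOcard : k (Fin.last s) + 1 ≤ O.card := by
    have htot : Fintype.card ((i : Fin (s + 1)) × Fin (k i)) =
        (∑ i : Fin s, k i.castSucc) + k (Fin.last s) := by
      simp [Fintype.card_sigma, Fin.sum_univ_castSucc]
    have hin : (Finset.univ.filter (fun v : (i : Fin (s + 1)) × Fin (k i) => φ v ∈ C)).card
        ≤ C.card :=
      Finset.card_le_card_of_injOn φ (fun v hv => (Finset.mem_filter.mp hv).2)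
        (fun a _ b _ h => hφ h)
    have hsplit : (Finset.univ.filter
        (fun v : (i : Fin (s + 1)) × Fin (k i) => φ v ∈ C)).card + O.card =
        Fintype.card ((i : Fin (s + 1)) × Fin (k i)) := by
      rw [hO_def, ← Finset.card_univ]
      exact Finset.card_filter_add_card_filter_not (p := fun v => φ v ∈ C)
    rw [htot] at hsplit
    rw [hC] at hin
    omega
  -- O is nonempty; pick u
  have hOne : O.Nonempty := Finset.card_pos.mp (by omega)
  obtain ⟨u, hu⟩ := hOne
  obtain ⟨a, ha⟩ := hOB u hu
  by_cases hcase : ∀ v ∈ O, φ v ∈ B a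
  · -- all outside vertices in a single B a
    have : O.card ≤ (B a).card :=
      Finset.card_le_card_of_injOn φ hcase (fun x _ y _ h => hφ h)
    rw [hB a] at this
    omega
  · push_neg at hcase
    obtain ⟨w, hw, hwa⟩ := hcase
    obtain ⟨b, hb⟩ := hOB w hw
    have hba : b ≠ a := fun h => hwa (h ▸ hb)
    -- every outside vertex is in part u.1
    have hpart : ∀ v ∈ O, v.1 = u.1 := by
      intro v hv
      obtain ⟨c, hc⟩ := hOB v hv
      by_cases hca : c = a
      · have h1 : v.1 = w.1 := key v w c b hc hb (hca ▸ hba.symm)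
        have h2 : u.1 = w.1 := key u w a b ha hb hba.symm
        exact h1.trans h2.symm
      · exact key v u c a hc ha hca
    have hcard : O.card ≤ k u.1 := by
      have : O.card ≤ (Finset.range (k u.1)).card := by
        refine Finset.card_le_card_of_injOn (fun v => (v.2 : ℕ)) ?_ ?_
        · intro v hv
          rw [Finset.mem_coe, Finset.mem_range]
          calc ((v.2 : Fin (k v.1)) : ℕ) < k v.1 := v.2.isLt
            _ = k u.1 := congrArg k (hpart v hv)
        · intro v hv x hx hvx
          have h1 : v.1 = x.1 := (hpart v hv).trans (hpart x hx).symm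
          rcases v with ⟨p, y⟩
          rcases x with ⟨q, z⟩
          simp only at h1
          subst h1
          simp only at hvx
          exact congrArg (Sigma.mk p) (Fin.ext hvx)
      simpa using this
    have : k u.1 ≤ k (Fin.last s) := hmono (Fin.le_last _)
    omega
end

section
/- Let F be a connected graph with a cut-edge (u,w), let F_u be the component of u in F minus that edge, and suppose F is not a star. Let G be a set of e(F) − 1 hyperedges, each an r-subset of a set B of size r + 1 (with r ≥ e(F)), and let u_i ∈ B. Then G contains a Berge copy of F_u in which u is played by u_i. (Equivalently, Hall's condition holds in the bipartite graph between the at most e(F) − 1 edges of F_u and the e(F) − 1 hyperedges of G, where an edge e of F_u is compatible with a hyperedge h if the images of e's endpoints lie in h.) -/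
private lemma aux_closure {α : Type*} {H : SimpleGraph α} {S : Set α}
    (hS : ∀ a ∈ S, ∀ b, H.Adj a b → b ∈ S) :
    ∀ {x y : α}, H.Walk x y → x ∈ S → y ∈ S := by
  intro x y p
  induction p with
  | nil => exact id
  | cons h q ih => exact fun hx => ih (hS _ hx _ h)

private lemma aux_closure' {α : Type*} {H : SimpleGraph α} {S : Set α}
    (hS : ∀ a ∈ S, ∀ b, H.Adj a b → b ∈ S) {x y : α} (hx : x ∈ S)
    (hxy : H.Reachable x y) : y ∈ S := by
  obtain ⟨p⟩ := hxy
  exact aux_closure hS p hx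

private lemma sym2_exists_rep {α : Type*} (e : Sym2 α) : ∃ a b, e = s(a, b) :=
  Sym2.ind (fun a b => ⟨a, b, rfl⟩) e

private lemma sym2_eq_of_mem {α : Type*} {a b : α} (hab : a ≠ b) :
    ∀ {e : Sym2 α}, a ∈ e → b ∈ e → e = s(a, b) := by
  intro e
  induction e using Sym2.ind with
  | _ x y =>
    intro ha hb
    rcases Sym2.mem_iff.mp ha with rfl | rfl <;> rcases Sym2.mem_iff.mp hb with rfl | rfl
    · exact absurd rfl hab
    · rfl
    · exact Sym2.eq_swap
    · exact absurd rfl hab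

/-- A connected component (here: the set of vertices reachable from `u`) of a graph
has at most (number of edges) + 1 vertices. -/
private lemma comp_card_le {α : Type*} [Fintype α] [DecidableEq α] (K : SimpleGraph α) (u : α)
    (C : Finset α) (hC : ∀ a, a ∈ C ↔ K.Reachable u a)
    (E : Finset (Sym2 α)) (hE : ∀ e, e ∈ K.edgeSet → e ∈ E) :
    C.card ≤ E.card + 1 := by
  classical
  have key : ∀ a ∈ C.erase u, ∃ z : α, K.Adj z a ∧ K.dist u z + 1 = K.dist u a := by
    intro a ha
    rw [Finset.mem_erase] at ha
    obtain ⟨hau, haC⟩ := ha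
    have hreach : K.Reachable u a := (hC a).mp haC
    obtain ⟨p, hp⟩ := hreach.exists_walk_length_eq_dist
    obtain ⟨z, h, q, hq⟩ := SimpleGraph.Walk.exists_eq_cons_of_ne hau p.reverse
    have hlen : q.length + 1 = K.dist u a := by
      have h1 := congrArg SimpleGraph.Walk.length hq
      rw [SimpleGraph.Walk.length_reverse, hp, SimpleGraph.Walk.length_cons] at h1
      omega
    have h1 : K.dist u z ≤ q.length := by
      have := K.dist_le q.reverse
      rwa [SimpleGraph.Walk.length_reverse] at this
    have h2 : K.dist u a ≤ K.dist u z + 1 := by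
      have hrz : K.Reachable u z := ⟨q.reverse⟩
      obtain ⟨p2, hp2⟩ := hrz.exists_walk_length_eq_dist
      have := K.dist_le (p2.append h.symm.toWalk)
      rw [SimpleGraph.Walk.length_append, hp2] at this
      simpa [SimpleGraph.Adj.toWalk] using this
    exact ⟨z, h.symm, by omega⟩
  choose z hz1 hz2 using key
  have huC : u ∈ C := (hC u).mpr (SimpleGraph.Reachable.refl u)
  set j : α → Sym2 α := fun a => if h : a ∈ C.erase u then s(z a h, a) else s(a, a) with hjdef
  have hinj : Set.InjOn j (C.erase u) := by
    intro a ha b hb hab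
    have ha' : a ∈ C.erase u := ha
    have hb' : b ∈ C.erase u := hb
    rw [hjdef] at hab
    simp only [dif_pos ha', dif_pos hb'] at hab
    rcases Sym2.eq_iff.mp hab with ⟨h1, h2⟩ | ⟨h1, h2⟩
    · exact h2
    · exfalso
      have e1 := hz2 a ha'
      have e2 := hz2 b hb'
      rw [h1] at e1
      rw [← h2] at e2
      omega
  have hmap : ∀ a ∈ C.erase u, j a ∈ E := by
    intro a ha
    rw [hjdef]
    simp only [dif_pos ha]
    exact hE _ ((SimpleGraph.mem_edgeSet _).mpr (hz1 a ha))
  have h1 : (C.erase u).card ≤ E.card := Finset.card_le_card_of_injOn j hmap hinj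
  have h2 : (C.erase u).card + 1 = C.card := Finset.card_erase_add_one huC
  omega

/-- Let `F` be connected, not a star, with a cut-edge `(u,w)`, and let `F_u` be the
component of `u` in `F` minus that edge. If `G` consists of `e(F) − 1` hyperedges, each
an `r`-subset of an `(r+1)`-set `B` (with `r ≥ e(F)`), and `u_i ∈ B`, then `G` contains a
Berge copy of `F_u` in which `u` is played by `u_i`. -/
theorem stmt10 {α V : Type*} [Fintype α] [DecidableEq V] (F : SimpleGraph α)
    (hconn : F.Connected) (u w : α) (huw : F.Adj u w)
    (hcut : ¬ (F.deleteEdges {s(u, w)}).Connected)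
    (hnotstar : ¬ ∃ c : α, ∀ e ∈ F.edgeSet, c ∈ e)
    (r : ℕ) (hr : F.edgeSet.ncard ≤ r)
    (B : Finset V) (hB : B.card = r + 1)
    (G : Finset (Finset V)) (hG : ∀ g ∈ G, g ⊆ B ∧ g.card = r)
    (hGcard : G.card = F.edgeSet.ncard - 1)
    (ui : V) (hui : ui ∈ B) :
    let F' := F.deleteEdges {s(u, w)}
    let Fu : SimpleGraph α :=
      { Adj := fun a b => F'.Adj a b ∧ F'.Reachable u a ∧ F'.Reachable u b
        symm := ⟨fun a b h => ⟨h.1.symm, h.2.2, h.2.1⟩⟩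
        loopless := ⟨fun a h => F'.loopless.irrefl a h.1⟩ }
    ∃ (φ : α → V) (f : Sym2 α → Finset V),
      Set.InjOn φ {a | F'.Reachable u a} ∧ φ u = ui ∧
      Set.InjOn f Fu.edgeSet ∧
      ∀ e ∈ Fu.edgeSet, f e ∈ G ∧ ∀ a ∈ e, φ a ∈ f e := by
  intro F' Fu
  classical
  have hFuF' : Fu ≤ F' := by intro a b h; exact h.1
  have hF'F : F' ≤ F := SimpleGraph.deleteEdges_le _
  have hFuF : Fu ≤ F := le_trans hFuF' hF'F
  -- finite edge/vertex sets
  have hEFfin : F.edgeSet.Finite := Set.toFinite _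
  have hEufin : Fu.edgeSet.Finite := Set.toFinite _
  have hCfin : {a : α | F'.Reachable u a}.Finite := Set.toFinite _
  set EF : Finset (Sym2 α) := hEFfin.toFinset with hEFdef
  set Ef : Finset (Sym2 α) := hEufin.toFinset with hEfdef
  set C : Finset α := hCfin.toFinset with hCdef
  have hEF : ∀ e, e ∈ EF ↔ e ∈ F.edgeSet := fun e => Set.Finite.mem_toFinset _
  have hEf : ∀ e, e ∈ Ef ↔ e ∈ Fu.edgeSet := fun e => Set.Finite.mem_toFinset _
  have hCmem : ∀ a, a ∈ C ↔ F'.Reachable u a := fun a => Set.Finite.mem_toFinset _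
  set k := G.card with hkdef
  set m := Ef.card with hmdef
  have hncard : F.edgeSet.ncard = EF.card := Set.ncard_eq_toFinset_card _ hEFfin
  have huwEF : s(u, w) ∈ EF := (hEF _).mpr huw
  have hEFpos : 1 ≤ EF.card := Finset.card_pos.mpr ⟨_, huwEF⟩
  have hEFk : EF.card = k + 1 := by omega
  have hrk : k + 1 ≤ r := by omega
  -- u cannot reach w after deleting the cut edge
  have hnr : ¬ F'.Reachable u w := by
    intro hru
    apply hcut
    rw [SimpleGraph.connected_iff]
    refine ⟨fun a b => ?_, hconn.nonempty⟩
    have hF : F.Reachable a b := hconn.preconnected a b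
    refine aux_closure' (S := {c | F'.Reachable a c}) ?_ (SimpleGraph.Reachable.refl a) hF
    intro x hx y hxy
    by_cases he : s(x, y) = s(u, w)
    · rcases Sym2.eq_iff.mp he with ⟨rfl, rfl⟩ | ⟨rfl, rfl⟩
      · exact (hx : F'.Reachable a x).trans hru
      · exact (hx : F'.Reachable a x).trans hru.symm
    · have hadj : F'.Adj x y := by
        refine SimpleGraph.deleteEdges_adj.mpr ⟨hxy, ?_⟩
        simpa using he
      exact (hx : F'.Reachable a x).trans hadj.reachable
  have huwEf : s(u, w) ∉ Ef := by
    intro h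
    exact hnr ((SimpleGraph.mem_edgeSet _).mp ((hEf _).mp h)).2.2
  have hsubEF : insert s(u, w) Ef ⊆ EF := by
    intro e he
    rcases Finset.mem_insert.mp he with rfl | he
    · exact huwEF
    · exact (hEF e).mpr (SimpleGraph.edgeSet_mono hFuF ((hEf e).mp he))
  have hmk : m ≤ k := by
    have := Finset.card_le_card hsubEF
    rw [Finset.card_insert_of_notMem huwEf, hEFk] at this
    omega
  -- reachability in F' from u implies reachability in Fu
  have hreachFu : ∀ a, F'.Reachable u a → Fu.Reachable u a := by
    intro a ha
    refine aux_closure' (S := {x | Fu.Reachable u x}) ?_ (SimpleGraph.Reachable.refl u) ha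
    intro x hx y hxy
    have hrx : F'.Reachable u x := (hx : Fu.Reachable u x).mono hFuF'
    have hadj : Fu.Adj x y := ⟨hxy, hrx, hrx.trans hxy.reachable⟩
    exact (hx : Fu.Reachable u x).trans hadj.reachable
  -- endpoints of edges of Fu are reachable from u in F'
  have hEndC : ∀ e ∈ Fu.edgeSet, ∀ a ∈ e, F'.Reachable u a := by
    intro e
    induction e using Sym2.ind with
    | _ x y =>
      intro he a ha
      have hadj : Fu.Adj x y := (SimpleGraph.mem_edgeSet _).mp he
      rcases Sym2.mem_iff.mp ha with rfl | rfl
      · exact hadj.2.1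
      · exact hadj.2.2
  -- If Fu has all edges of F except uw, and all edges of Fu contain u, contradiction
  have hAllU : m = k → (∀ e ∈ Fu.edgeSet, u ∈ e) → False := by
    intro hmeq hall
    have hcards : EF.card ≤ (insert s(u, w) Ef).card := by
      rw [Finset.card_insert_of_notMem huwEf, hEFk]
      omega
    have heq : insert s(u, w) Ef = EF := Finset.eq_of_subset_of_card_le hsubEF hcards
    refine hnotstar ⟨u, fun e he => ?_⟩
    have : e ∈ insert s(u, w) Ef := heq ▸ (hEF e).mpr he
    rcases Finset.mem_insert.mp this with rfl | h
    · exact Sym2.mem_mk_left u w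
    · exact hall e ((hEf e).mp h)
  -- F has at least 3 edges
  have hk2 : 2 ≤ k := by
    by_contra hlt
    push_neg at hlt
    have : k = 0 ∨ k = 1 := by omega
    rcases this with hk | hk
    · -- one edge: star at u
      have h1 : EF.card = 1 := by omega
      obtain ⟨e, he⟩ := Finset.card_eq_one.mp h1
      have heuw : e = s(u, w) := by
        have := huwEF
        rw [he, Finset.mem_singleton] at this
        exact this.symm
      refine hnotstar ⟨u, fun e' he' => ?_⟩
      have : e' ∈ EF := (hEF e').mpr he'
      rw [he, Finset.mem_singleton] at this
      rw [this, heuw]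
      exact Sym2.mem_mk_left u w
    · -- two edges
      have h2 : (EF.erase s(u, w)).card = 1 := by
        rw [Finset.card_erase_of_mem huwEF]
        omega
      obtain ⟨e2, he2⟩ := Finset.card_eq_one.mp h2
      have he2m : e2 ∈ EF.erase s(u, w) := he2 ▸ Finset.mem_singleton_self e2
      have he2EF : e2 ∈ EF := Finset.mem_of_mem_erase he2m
      have hEFeq : ∀ e ∈ EF, e = s(u, w) ∨ e = e2 := by
        intro e he
        by_cases h : e = s(u, w)
        · exact Or.inl h
        · right
          have : e ∈ EF.erase s(u, w) := Finset.mem_erase.mpr ⟨h, he⟩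
          rw [he2, Finset.mem_singleton] at this
          exact this
      obtain ⟨a, b, rfl⟩ := sym2_exists_rep e2
      by_cases hcommon : u ∈ s(a, b) ∨ w ∈ s(a, b)
      · rcases hcommon with h | h
        · refine hnotstar ⟨u, fun e he => ?_⟩
          rcases hEFeq e ((hEF e).mpr he) with rfl | rfl
          · exact Sym2.mem_mk_left u w
          · exact h
        · refine hnotstar ⟨w, fun e he => ?_⟩
          rcases hEFeq e ((hEF e).mpr he) with rfl | rfl
          · exact Sym2.mem_mk_right u w
          · exact h
      · push_neg at hcommon
        have hclose : ∀ x ∈ ({u, w} : Set α), ∀ y, F.Adj x y → y ∈ ({u, w} : Set α) := by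
          intro x hx y hxy
          have hm : s(x, y) ∈ EF := (hEF _).mpr hxy
          rcases hEFeq _ hm with he | he
          · have : y ∈ s(u, w) := he ▸ Sym2.mem_mk_right x y
            rcases Sym2.mem_iff.mp this with rfl | rfl
            · exact Set.mem_insert _ _
            · exact Set.mem_insert_of_mem _ rfl
          · exfalso
            have hxm : x ∈ s(a, b) := he ▸ Sym2.mem_mk_left x y
            rcases hx with rfl | hx
            · exact hcommon.1 hxm
            · rw [Set.mem_singleton_iff] at hx
              subst hx
              exact hcommon.2 hxm
        have haC : a ∈ ({u, w} : Set α) :=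
          aux_closure' hclose (Set.mem_insert u _) (hconn.preconnected u a)
        rcases haC with rfl | haC
        · exact hcommon.1 (Sym2.mem_mk_left a b)
        · rw [Set.mem_singleton_iff] at haC
          subst haC
          exact hcommon.2 (Sym2.mem_mk_left a b)
  -- each hyperedge is B minus one element
  have hmiss : ∀ g ∈ G, ∀ v ∈ B, v ∉ g → g = B.erase v := by
    intro g hg v hvB hvg
    have hsub : g ⊆ B.erase v := fun x hx =>
      Finset.mem_erase.mpr ⟨fun h => hvg (h ▸ hx), (hG g hg).1 hx⟩
    have hc : (B.erase v).card ≤ g.card := by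
      rw [Finset.card_erase_of_mem hvB, hB, (hG g hg).2]
      omega
    exact Finset.eq_of_subset_of_card_le hsub hc
  have herase_inj : ∀ v ∈ B, ∀ v' ∈ B, B.erase v = B.erase v' → v = v' := by
    intro v hv v' hv' h
    by_contra hne
    exact (Finset.notMem_erase v' B)
      (h ▸ Finset.mem_erase.mpr ⟨fun hh => hne hh.symm, hv'⟩)
  -- a spare vertex y of B distinct from ui contained in every hyperedge
  have hy : ∃ y ∈ B, y ≠ ui ∧ ∀ g ∈ G, y ∈ g := by
    by_contra hno
    push_neg at hno
    have hmap : ∀ x ∈ B.erase ui, B.erase x ∈ G := by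
      intro x hx
      obtain ⟨hxne, hxB⟩ := Finset.mem_erase.mp hx
      obtain ⟨g, hgG, hgx⟩ := hno x hxB hxne
      have := hmiss g hgG x hxB hgx
      rwa [this] at hgG
    have hinj : Set.InjOn (fun x => B.erase x) (B.erase ui) := by
      intro x hx x' hx' h
      exact herase_inj x (Finset.mem_of_mem_erase hx) x' (Finset.mem_of_mem_erase hx') h
    have hcard := Finset.card_le_card_of_injOn (fun x => B.erase x) hmap hinj
    rw [Finset.card_erase_of_mem hui, hB] at hcard
    omega
  obtain ⟨y, hyB, hyui, hyg⟩ := hy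
  -- the special vertex c
  obtain ⟨c, hc⟩ : ∃ c : α,
      (∃ p : α, p ≠ u ∧ ∀ e ∈ Fu.edgeSet, p ∈ e) → (c ≠ u ∧ ∀ e ∈ Fu.edgeSet, c ∈ e) := by
    by_cases hP : ∃ p : α, p ≠ u ∧ ∀ e ∈ Fu.edgeSet, p ∈ e
    · obtain ⟨p, hp⟩ := hP
      exact ⟨p, fun _ => hp⟩
    · exact ⟨u, fun h => absurd h hP⟩
  -- size of the component
  have hCE : C.card ≤ m + 1 := by
    refine comp_card_le Fu u C ?_ Ef (fun e he => (hEf e).mpr he)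
    intro a
    constructor
    · exact fun h => hreachFu a ((hCmem a).mp h)
    · exact fun h => (hCmem a).mpr (h.mono hFuF')
  have huC : u ∈ C := (hCmem u).mpr (SimpleGraph.Reachable.refl u)
  -- the injection for generic vertices
  have hyBe : y ∈ B.erase ui := Finset.mem_erase.mpr ⟨hyui, hyB⟩
  have hjex : ∃ j : α → V, Set.InjOn j ((C.erase u).erase c) ∧
      ∀ a ∈ (C.erase u).erase c, j a ∈ (B.erase ui).erase y := by
    have hcard : ((C.erase u).erase c).card ≤ ((B.erase ui).erase y).card := by
      have h1 : ((C.erase u).erase c).card ≤ (C.erase u).card := Finset.card_erase_le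
      have h2 : (C.erase u).card + 1 = C.card := Finset.card_erase_add_one huC
      have h3 : ((B.erase ui).erase y).card + 1 = (B.erase ui).card :=
        Finset.card_erase_add_one hyBe
      have h4 : (B.erase ui).card = r := by
        rw [Finset.card_erase_of_mem hui, hB]
        omega
      omega
    have hcard' : Fintype.card ((C.erase u).erase c : Finset α) ≤
        Fintype.card ((B.erase ui).erase y : Finset V) := by
      rwa [Fintype.card_coe, Fintype.card_coe]
    obtain ⟨emb⟩ := Function.Embedding.nonempty_of_card_le hcard'
    refine ⟨fun a => if h : a ∈ (C.erase u).erase c then (emb ⟨a, h⟩ : V) else ui, ?_, ?_⟩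
    · intro a ha b hb heq
      have ha' : a ∈ (C.erase u).erase c := ha
      have hb' : b ∈ (C.erase u).erase c := hb
      simp only [dif_pos ha', dif_pos hb'] at heq
      have := emb.injective (Subtype.ext heq)
      exact congrArg Subtype.val this
    · intro a ha
      simp only [dif_pos ha]
      exact (emb ⟨a, ha⟩).2
  obtain ⟨j, hjinj, hjmem⟩ := hjex
  -- the vertex map φ
  set φ : α → V := fun a => if a = u then ui else if a = c then y else j a with hφdef
  have hφu : φ u = ui := by rw [hφdef]; simp
  have hφy_c : c ≠ u → φ c = y := by
    intro h
    rw [hφdef]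
    simp [h]
  have hφj : ∀ a, a ≠ u → a ≠ c → φ a = j a := by
    intro a h1 h2
    rw [hφdef]
    simp [h1, h2]
  have hmemCe : ∀ a ∈ C, a ≠ u → a ≠ c → a ∈ (C.erase u).erase c := by
    intro a ha h1 h2
    exact Finset.mem_erase.mpr ⟨h2, Finset.mem_erase.mpr ⟨h1, ha⟩⟩
  have hφB : ∀ a ∈ C, φ a ∈ B := by
    intro a ha
    by_cases h1 : a = u
    · rw [h1, hφu]; exact hui
    by_cases h2 : a = c
    · rw [h2, hφy_c (h2 ▸ h1)]; exact hyB
    · rw [hφj a h1 h2]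
      exact Finset.mem_of_mem_erase (Finset.mem_of_mem_erase (hjmem a (hmemCe a ha h1 h2)))
  have hφne_ui : ∀ a ∈ C, a ≠ u → φ a ≠ ui := by
    intro a ha h1
    by_cases h2 : a = c
    · rw [h2, hφy_c (h2 ▸ h1)]; exact hyui
    · rw [hφj a h1 h2]
      exact (Finset.mem_erase.mp
        (Finset.mem_of_mem_erase (hjmem a (hmemCe a ha h1 h2)))).1
  have hφne_y : ∀ a ∈ C, a ≠ u → a ≠ c → φ a ≠ y := by
    intro a ha h1 h2
    rw [hφj a h1 h2]
    exact (Finset.mem_erase.mp (hjmem a (hmemCe a ha h1 h2))).1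
  have hφinj : Set.InjOn φ {a : α | F'.Reachable u a} := by
    intro a ha b hb heq
    have haC : a ∈ C := (hCmem a).mpr ha
    have hbC : b ∈ C := (hCmem b).mpr hb
    by_cases h1 : a = u <;> by_cases h2 : b = u
    · rw [h1, h2]
    · exact absurd (by rw [← heq, h1, hφu]) (Ne.symm (hφne_ui b hbC h2))
    · exact absurd (by rw [heq, h2, hφu]) (Ne.symm (hφne_ui a haC h1))
    · by_cases h3 : a = c <;> by_cases h4 : b = c
      · rw [h3, h4]
      · exact absurd (by rw [← heq, h3, hφy_c (h3 ▸ h1)])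
          (Ne.symm (hφne_y b hbC h2 h4))
      · exact absurd (by rw [heq, h4, hφy_c (h4 ▸ h2)])
          (Ne.symm (hφne_y a haC h1 h3))
      · rw [hφj a h1 h3, hφj b h2 h4] at heq
        exact hjinj (hmemCe a haC h1 h3) (hmemCe b hbC h2 h4) heq
  -- Hall's condition
  set t : {e // e ∈ Ef} → Finset (Finset V) :=
    fun e => G.filter (fun g => ∀ a ∈ (e : Sym2 α), φ a ∈ g) with htdef
  have ht : ∀ (e : {e // e ∈ Ef}) (g : Finset V),
      g ∈ t e ↔ (g ∈ G ∧ ∀ a ∈ (e : Sym2 α), φ a ∈ g) := by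
    intro e g
    rw [htdef]
    exact Finset.mem_filter
  have hHall : ∀ s : Finset {e // e ∈ Ef}, s.card ≤ (s.biUnion t).card := by
    intro s
    rcases Finset.eq_empty_or_nonempty s with rfl | ⟨e₀, he₀⟩
    · simp
    have hNsub : s.biUnion t ⊆ G :=
      Finset.biUnion_subset.mpr fun e _ => by rw [htdef]; exact Finset.filter_subset _ _
    have hMN : (G \ s.biUnion t).card + (s.biUnion t).card = k :=
      Finset.card_sdiff_add_card_eq_card hNsub
    set M : Finset (Finset V) := G \ s.biUnion t with hMdef
    suffices hsuf : s.card + M.card ≤ k by omega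
    have hsm : s.card ≤ m := by
      have := Finset.card_le_univ s
      rwa [Fintype.card_coe] at this
    have hMel : ∀ g ∈ M, ∀ e ∈ s, ∃ a, a ∈ (e : Sym2 α) ∧ F'.Reachable u a ∧
        g = B.erase (φ a) := by
      intro g hg e hes
      obtain ⟨hgG, hgN⟩ := Finset.mem_sdiff.mp hg
      have hnt : g ∉ t e := fun h => hgN (Finset.mem_biUnion.mpr ⟨e, hes, h⟩)
      rw [ht] at hnt
      push_neg at hnt
      obtain ⟨a, hae, hag⟩ := hnt hgG
      have haR : F'.Reachable u a := hEndC _ ((hEf _).mp e.2) a hae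
      exact ⟨a, hae, haR, hmiss g hgG (φ a) (hφB a ((hCmem a).mpr haR)) hag⟩
    have hMv : ∀ g ∈ M, ∃ v, (∀ e ∈ s, v ∈ (e : Sym2 α)) ∧ F'.Reachable u v ∧
        g = B.erase (φ v) := by
      intro g hg
      obtain ⟨v, hv0, hvR, hvg⟩ := hMel g hg e₀ he₀
      refine ⟨v, ?_, hvR, hvg⟩
      intro e hes
      obtain ⟨a, hae, haR, hag⟩ := hMel g hg e hes
      have hBa : φ a ∈ B := hφB a ((hCmem a).mpr haR)
      have hBv : φ v ∈ B := hφB v ((hCmem v).mpr hvR)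
      have heq : φ a = φ v := herase_inj _ hBa _ hBv (hag.symm.trans hvg)
      have hav : a = v := hφinj haR hvR heq
      exact hav ▸ hae
    -- c is never one of the "blocking" vertices
    have hcnv : ∀ (g : Finset V), g ∈ M → ∀ v, g = B.erase (φ v) → c ≠ u → c ≠ v := by
      intro g hg v hgv hcu hceq
      have h1 : φ v = y := by rw [← hceq, hφy_c hcu]
      have h2 : y ∉ g := by
        rw [hgv, h1]
        exact Finset.notMem_erase _ _
      exact h2 (hyg g (Finset.mem_sdiff.mp hg).1)
    obtain ⟨a₀, b₀, he₀ab⟩ := sym2_exists_rep (e₀ : Sym2 α)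
    have hM2 : M.card ≤ 2 := by
      have hsub2 : M ⊆ {B.erase (φ a₀), B.erase (φ b₀)} := by
        intro g hg
        obtain ⟨a, hae, _, hag⟩ := hMel g hg e₀ he₀
        rw [he₀ab] at hae
        rcases Sym2.mem_iff.mp hae with rfl | rfl
        · simp [hag]
        · simp [hag]
      calc M.card ≤ ({B.erase (φ a₀), B.erase (φ b₀)} : Finset (Finset V)).card :=
            Finset.card_le_card hsub2
        _ ≤ 2 := Finset.card_insert_le _ _ |>.trans (by simp)
    rcases Nat.lt_or_ge M.card 1 with hM0 | hM1
    · omega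
    rcases Nat.lt_or_ge M.card 2 with hMlt2 | hM2'
    · -- M.card = 1
      by_contra hcon
      have hsk : s.card = k := by omega
      have hmkk : m = k := by omega
      obtain ⟨g, hg⟩ := Finset.card_pos.mp hM1
      obtain ⟨v, hv1, hv2, hv3⟩ := hMv g hg
      have hsall : ∀ e : {e // e ∈ Ef}, e ∈ s := by
        have : s = Finset.univ := Finset.eq_univ_of_card s (by
          rw [Fintype.card_coe]
          omega)
        intro e
        rw [this]
        exact Finset.mem_univ e
      have hvall : ∀ e ∈ Fu.edgeSet, v ∈ e := fun e he =>
        hv1 ⟨e, (hEf e).mpr he⟩ (hsall _)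
      by_cases hvu : v = u
      · exact hAllU hmkk (hvu ▸ hvall)
      · obtain ⟨hcu, hcall⟩ := hc ⟨v, hvu, hvall⟩
        have hcv : c ≠ v := hcnv g hg v hv3 hcu
        have h2m : 2 ≤ m := by omega
        obtain ⟨e1, he1, e2, he2, hne12⟩ := Finset.one_lt_card.mp h2m
        have heq1 : e1 = s(c, v) :=
          sym2_eq_of_mem hcv (hcall e1 ((hEf _).mp he1)) (hvall e1 ((hEf _).mp he1))
        have heq2 : e2 = s(c, v) :=
          sym2_eq_of_mem hcv (hcall e2 ((hEf _).mp he2)) (hvall e2 ((hEf _).mp he2))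
        exact hne12 (heq1.trans heq2.symm)
    · -- M.card ≥ 2, hence = 2 and s is a single edge
      obtain ⟨g, hg, g', hg', hgg'⟩ := Finset.one_lt_card.mp hM2'
      obtain ⟨v, hv1, hv2, hv3⟩ := hMv g hg
      obtain ⟨v', hv1', hv2', hv3'⟩ := hMv g' hg'
      have hvv' : v ≠ v' := by
        intro heq
        exact hgg' (by rw [hv3, hv3', heq])
      have hs1 : s.card ≤ 1 := by
        refine Finset.card_le_one.mpr ?_
        intro e1 h1 e2 h2
        have q1 : (e1 : Sym2 α) = s(v, v') := sym2_eq_of_mem hvv' (hv1 e1 h1) (hv1' e1 h1)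
        have q2 : (e2 : Sym2 α) = s(v, v') := sym2_eq_of_mem hvv' (hv1 e2 h2) (hv1' e2 h2)
        exact Subtype.ext (q1.trans q2.symm)
      rcases Nat.lt_or_ge k 3 with hk3 | hk3
      swap
      · omega
      · exfalso
        have hk2' : k = 2 := by omega
        have he₀vv : (e₀ : Sym2 α) = s(v, v') :=
          sym2_eq_of_mem hvv' (hv1 e₀ he₀) (hv1' e₀ he₀)
        have hm1 : 1 ≤ m := Finset.card_pos.mpr ⟨(e₀ : Sym2 α), e₀.2⟩
        have hm2u : m ≤ 2 := by omega
        -- u lies on some edge of Fu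
        have huedge : ∃ e ∈ Fu.edgeSet, u ∈ e := by
          by_cases hvu : v = u
          · exact ⟨(e₀ : Sym2 α), (hEf _).mp e₀.2, hvu ▸ hv1 e₀ he₀⟩
          · have hreach : Fu.Reachable u v := hreachFu v hv2
            obtain ⟨p⟩ := hreach
            cases p with
            | nil => exact absurd rfl (Ne.symm hvu)
            | @cons _ z _ h q =>
              exact ⟨s(u, z), (SimpleGraph.mem_edgeSet _).mpr h, Sym2.mem_mk_left _ _⟩
        obtain ⟨eu, heu, hueu⟩ := huedge
        -- there is a vertex different from u lying on all edges of Fu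
        have hPex : ∃ p : α, p ≠ u ∧ ∀ e ∈ Fu.edgeSet, p ∈ e := by
          rcases Nat.lt_or_ge m 2 with hmlt | hm2' 
          · -- m = 1
            have hm1' : m = 1 := by omega
            obtain ⟨eo, heo⟩ := Finset.card_eq_one.mp hm1'
            have hall : ∀ e ∈ Fu.edgeSet, e = eo := fun e he =>
              Finset.mem_singleton.mp (heo ▸ (hEf e).mpr he)
            have heo0 : (e₀ : Sym2 α) = eo := hall _ ((hEf _).mp e₀.2)
            have hueo : u ∈ eo := (hall eu heu) ▸ hueu
            have humem : u ∈ s(v, v') := by rw [← he₀vv, heo0]; exact hueo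
            rcases Sym2.mem_iff.mp humem with hre | hre
            · refine ⟨v', fun hh => hvv' ((hh.trans hre).symm), fun e he => ?_⟩
              rw [hall e he, ← heo0, he₀vv]
              exact Sym2.mem_mk_right _ _
            · refine ⟨v, fun hh => hvv' (hh.trans hre), fun e he => ?_⟩
              rw [hall e he, ← heo0, he₀vv]
              exact Sym2.mem_mk_left _ _
          · -- m = 2
            have hmkk : m = k := by omega
            obtain ⟨e1', he1', e2', he2', hne'⟩ := Finset.one_lt_card.mp hm2'
            have hEf2 : ∀ e ∈ Ef, e = e1' ∨ e = e2' := by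
              have hsubp : ({e1', e2'} : Finset (Sym2 α)) ⊆ Ef := by
                intro e he
                rcases Finset.mem_insert.mp he with rfl | he
                · exact he1'
                · rw [Finset.mem_singleton] at he
                  exact he ▸ he2'
              have hcp : ({e1', e2'} : Finset (Sym2 α)).card = 2 := Finset.card_pair hne'
              have heqp : ({e1', e2'} : Finset (Sym2 α)) = Ef :=
                Finset.eq_of_subset_of_card_le hsubp (by omega)
              intro e he
              rw [← heqp] at he
              rcases Finset.mem_insert.mp he with rfl | he
              · exact Or.inl rfl
              · exact Or.inr (Finset.mem_singleton.mp he)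
            obtain ⟨x1, y1, hx1⟩ := sym2_exists_rep e1'
            obtain ⟨x2, y2, hx2⟩ := sym2_exists_rep e2'
            have hne1 : x1 ≠ y1 := by
              have hd := SimpleGraph.not_isDiag_of_mem_edgeSet Fu ((hEf _).mp he1')
              rw [hx1] at hd
              simpa [Sym2.mk_isDiag_iff] using hd
            have hne2 : x2 ≠ y2 := by
              have hd := SimpleGraph.not_isDiag_of_mem_edgeSet Fu ((hEf _).mp he2')
              rw [hx2] at hd
              simpa [Sym2.mk_isDiag_iff] using hd
            have hx1C : x1 ∈ C := (hCmem _).mpr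
              (hEndC _ ((hEf _).mp he1') x1 (hx1 ▸ Sym2.mem_mk_left x1 y1))
            have hy1C : y1 ∈ C := (hCmem _).mpr
              (hEndC _ ((hEf _).mp he1') y1 (hx1 ▸ Sym2.mem_mk_right x1 y1))
            have hx2C : x2 ∈ C := (hCmem _).mpr
              (hEndC _ ((hEf _).mp he2') x2 (hx2 ▸ Sym2.mem_mk_left x2 y2))
            have hy2C : y2 ∈ C := (hCmem _).mpr
              (hEndC _ ((hEf _).mp he2') y2 (hx2 ▸ Sym2.mem_mk_right x2 y2))
            have hcommon : ∃ c₀, c₀ ∈ e1' ∧ c₀ ∈ e2' := by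
              by_contra hno
              push_neg at hno
              have d1 : x1 ∉ e2' := hno x1 (hx1 ▸ Sym2.mem_mk_left x1 y1)
              have d2 : y1 ∉ e2' := hno y1 (hx1 ▸ Sym2.mem_mk_right x1 y1)
              have m2x : x2 ∈ e2' := hx2 ▸ Sym2.mem_mk_left x2 y2
              have m2y : y2 ∈ e2' := hx2 ▸ Sym2.mem_mk_right x2 y2
              have n1 : x1 ≠ x2 := fun h => d1 (h ▸ m2x)
              have n2 : x1 ≠ y2 := fun h => d1 (h ▸ m2y)
              have n3 : y1 ≠ x2 := fun h => d2 (h ▸ m2x)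
              have n4 : y1 ≠ y2 := fun h => d2 (h ▸ m2y)
              have hsub4 : ({x1, y1, x2, y2} : Finset α) ⊆ C := by
                intro x hx
                simp only [Finset.mem_insert, Finset.mem_singleton] at hx
                rcases hx with rfl | rfl | rfl | rfl
                exacts [hx1C, hy1C, hx2C, hy2C]
              have hcard4 : ({x1, y1, x2, y2} : Finset α).card = 4 := by
                rw [Finset.card_insert_of_notMem (by simp [hne1, n1, n2]),
                  Finset.card_insert_of_notMem (by simp [n3, n4]),
                  Finset.card_pair hne2]
              have := Finset.card_le_card hsub4
              rw [hcard4] at this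
              omega
            obtain ⟨c₀, hc01, hc02⟩ := hcommon
            have hc0all : ∀ e ∈ Fu.edgeSet, c₀ ∈ e := by
              intro e he
              rcases hEf2 e ((hEf e).mpr he) with rfl | rfl
              exacts [hc01, hc02]
            by_cases hc0u : c₀ = u
            · exact (hAllU hmkk (hc0u ▸ hc0all)).elim
            · exact ⟨c₀, hc0u, hc0all⟩
        obtain ⟨hcu, hcall⟩ := hc hPex
        have hce₀ : c ∈ s(v, v') := he₀vv ▸ hcall _ ((hEf _).mp e₀.2)
        rcases Sym2.mem_iff.mp hce₀ with hre | hre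
        · exact hcnv g hg v hv3 hcu hre
        · exact hcnv g' hg' v' hv3' hcu hre
  -- apply Hall's theorem
  obtain ⟨f₀, hf₀inj, hf₀mem⟩ :=
    (Finset.all_card_le_biUnion_card_iff_exists_injective t).mp hHall
  refine ⟨φ, fun e => if h : e ∈ Ef then f₀ ⟨e, h⟩ else ∅, hφinj, hφu, ?_, ?_⟩
  · intro e1 h1 e2 h2 heq
    have h1' : e1 ∈ Ef := (hEf e1).mpr h1
    have h2' : e2 ∈ Ef := (hEf e2).mpr h2
    simp only [dif_pos h1', dif_pos h2'] at heq
    exact congrArg Subtype.val (hf₀inj heq)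
  · intro e he
    have he' : e ∈ Ef := (hEf e).mpr he
    obtain ⟨hGmem, hall⟩ := (ht ⟨e, he'⟩ _).mp (hf₀mem ⟨e, he'⟩)
    constructor
    · simp only [dif_pos he']
      exact hGmem
    · intro a ha
      simp only [dif_pos he']
      exact hall a ha
end

section
/- (Frankl–Pach consequence) For all positive integers r and k there is a constant c(r,k) such that the following holds: if 𝓗 is a family of sets, each of size at most r, that is not disjointly k-representable — i.e., there do not exist distinct elements y₁, …, y_k and sets F₁, …, F_k ∈ 𝓗 with y_α ∈ F_α and y_α ∉ F_j for all j ≠ α — then |𝓗| ≤ c(r,k). -/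
universe u

/-- `H` is disjointly `k`-representable: there exist distinct elements `y₁, …, y_k` and
sets `F₁, …, F_k ∈ H` with `y_α ∈ F_α` and `y_α ∉ F_j` for `j ≠ α`. -/
def DisjointlyRepresentable {α : Type u} (k : ℕ) (H : Finset (Finset α)) : Prop :=
  ∃ (y : Fin k → α) (Fs : Fin k → Finset α), Function.Injective y ∧
    (∀ a, Fs a ∈ H) ∧ ∀ a, y a ∈ Fs a ∧ ∀ j, j ≠ a → y a ∉ Fs j

lemma aux13 (k : ℕ) : ∀ r : ℕ, ∃ c : ℕ, ∀ {α : Type u} (H : Finset (Finset α)),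
    (∀ s ∈ H, s.card ≤ r) → ¬ DisjointlyRepresentable k H → H.card ≤ c := by
  intro r
  induction r with
  | zero =>
    refine ⟨1, fun {α} H hH _ => ?_⟩
    have hsub : H ⊆ {∅} := fun s hs => by
      simp [Finset.card_eq_zero.mp (Nat.le_zero.mp (hH s hs))]
    simpa using Finset.card_le_card hsub
  | succ r ih =>
    obtain ⟨c, hc⟩ := ih
    refine ⟨2 ^ ((k - 1) * (r + 1)) + k * c, ?_⟩
    intro α H hH hnDR
    classical
    set P : ℕ → Prop := fun t => DisjointlyRepresentable t H with hPdef
    have hP0 : P 0 := ⟨Fin.elim0, Fin.elim0, fun a => a.elim0, fun a => a.elim0,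
      fun a => a.elim0⟩
    set t := Nat.findGreatest P k with ht
    have htP : P t := Nat.findGreatest_spec (Nat.zero_le k) hP0
    have htk : t < k := lt_of_le_of_ne (Nat.findGreatest_le k)
      (fun h => hnDR (by rw [← h]; exact htP))
    have hnext : ¬ P (t + 1) := Nat.findGreatest_is_greatest (Nat.lt_succ_self t) (by omega)
    obtain ⟨y, Fs, hyinj, hFs, hrep⟩ := htP
    set Y : Finset α := Finset.univ.biUnion Fs with hY
    have hFsY : ∀ i, Fs i ⊆ Y := fun i x hx =>
      Finset.mem_biUnion.mpr ⟨i, Finset.mem_univ _, hx⟩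
    -- cover
    have cover : ∀ F ∈ H, (∃ i, y i ∈ F) ∨ F ⊆ Y := by
      intro F hF
      by_contra h
      push_neg at h
      obtain ⟨h1, h2⟩ := h
      obtain ⟨x, hxF, hxY⟩ := Finset.not_subset.mp h2
      have hxy : ∀ i, x ≠ y i := fun i hxyi =>
        hxY (hFsY i (hxyi ▸ (hrep i).1))
      refine hnext ⟨Fin.snoc y x, Fin.snoc Fs F, ?_, ?_, ?_⟩
      · intro i j hij
        induction i using Fin.lastCases with
        | last =>
          induction j using Fin.lastCases with
          | last => rfl
          | cast j =>
            simp only [Fin.snoc_last, Fin.snoc_castSucc] at hij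
            exact absurd hij (hxy j)
        | cast i =>
          induction j using Fin.lastCases with
          | last =>
            simp only [Fin.snoc_last, Fin.snoc_castSucc] at hij
            exact absurd hij.symm (hxy i)
          | cast j =>
            simp only [Fin.snoc_castSucc] at hij
            exact congrArg Fin.castSucc (hyinj hij)
      · intro a
        induction a using Fin.lastCases with
        | last => simpa using hF
        | cast a => simpa using hFs a
      · intro a
        induction a using Fin.lastCases with
        | last =>
          refine ⟨by simpa using hxF, fun j hj => ?_⟩
          induction j using Fin.lastCases with
          | last => exact absurd rfl hj
          | cast j =>
            simp only [Fin.snoc_last, Fin.snoc_castSucc]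
            exact fun hx => hxY (hFsY j hx)
        | cast a =>
          refine ⟨by simpa using (hrep a).1, fun j hj => ?_⟩
          induction j using Fin.lastCases with
          | last =>
            simpa using h1 a
          | cast j =>
            simp only [Fin.snoc_castSucc]
            exact (hrep a).2 j (by simpa using hj)
    -- counting
    set HY : Finset (Finset α) := H.filter (· ⊆ Y) with hHY
    set Hi : Fin t → Finset (Finset α) := fun i => H.filter (fun F => y i ∈ F) with hHi
    have hsub : H ⊆ HY ∪ Finset.univ.biUnion Hi := by
      intro F hF
      rcases cover F hF with ⟨i, hi⟩ | hFY
      · exact Finset.mem_union_right _ (Finset.mem_biUnion.mpr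
          ⟨i, Finset.mem_univ _, Finset.mem_filter.mpr ⟨hF, hi⟩⟩)
      · exact Finset.mem_union_left _ (Finset.mem_filter.mpr ⟨hF, hFY⟩)
    have hHYcard : HY.card ≤ 2 ^ ((k - 1) * (r + 1)) := by
      have h1 : HY ⊆ Y.powerset := fun F hF =>
        Finset.mem_powerset.mpr (Finset.mem_filter.mp hF).2
      have h2 : Y.card ≤ t * (r + 1) := by
        calc Y.card ≤ ∑ i : Fin t, (Fs i).card := Finset.card_biUnion_le
          _ ≤ ∑ _i : Fin t, (r + 1) := Finset.sum_le_sum (fun i _ => hH _ (hFs i))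
          _ = t * (r + 1) := by simp [mul_comm]
      calc HY.card ≤ Y.powerset.card := Finset.card_le_card h1
        _ = 2 ^ Y.card := Finset.card_powerset Y
        _ ≤ 2 ^ ((k - 1) * (r + 1)) := Nat.pow_le_pow_right (by norm_num)
            (le_trans h2 (Nat.mul_le_mul_right _ (by omega)))
    have hHicard : ∀ i, (Hi i).card ≤ c := by
      intro i
      set G : Finset (Finset α) := (Hi i).image (fun F => F.erase (y i)) with hG
      have hinj : Set.InjOn (fun F : Finset α => F.erase (y i)) ↑(Hi i) := by
        intro F hF F' hF' hFF
        have hyF : y i ∈ F := (Finset.mem_filter.mp hF).2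
        have hyF' : y i ∈ F' := (Finset.mem_filter.mp hF').2
        rw [← Finset.insert_erase hyF, ← Finset.insert_erase hyF']
        exact congrArg (insert (y i)) hFF
      have hcardeq : (Hi i).card = G.card := (Finset.card_image_of_injOn hinj).symm
      rw [hcardeq]
      apply hc G
      · intro s hs
        obtain ⟨F, hF, rfl⟩ := Finset.mem_image.mp hs
        have : F.card ≤ r + 1 := hH F (Finset.mem_filter.mp hF).1
        have := Finset.card_erase_of_mem (Finset.mem_filter.mp hF).2
        omega
      · rintro ⟨z, Gs, hzinj, hGs, hrepG⟩
        have hmem := fun a => Finset.mem_image.mp (hGs a)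
        choose F hFmem hFe using hmem
        refine hnDR ?_
        have hkt : k = t + 1 + (k - t - 1) := by omega
        -- instead build a k-representation?  No: DR k H needed.  Use z, F directly.
        refine ⟨z, F, hzinj, fun a => (Finset.mem_filter.mp (hFmem a)).1, fun a => ?_⟩
        have hz : ∀ a, z a ∈ (F a).erase (y i) := fun a => (hFe a) ▸ (hrepG a).1
        refine ⟨Finset.mem_of_mem_erase (hz a), fun j hj hzF => ?_⟩
        have hzne : z a ≠ y i := (Finset.mem_erase.mp (hz a)).1
        exact (hrepG a).2 j hj ((hFe j) ▸ Finset.mem_erase.mpr ⟨hzne, hzF⟩)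
    calc H.card ≤ (HY ∪ Finset.univ.biUnion Hi).card := Finset.card_le_card hsub
      _ ≤ HY.card + (Finset.univ.biUnion Hi).card := Finset.card_union_le _ _
      _ ≤ HY.card + ∑ i : Fin t, (Hi i).card := by
          exact Nat.add_le_add_left Finset.card_biUnion_le _
      _ ≤ 2 ^ ((k - 1) * (r + 1)) + t * c := by
          refine Nat.add_le_add hHYcard ?_
          calc ∑ i : Fin t, (Hi i).card ≤ ∑ _i : Fin t, c :=
                Finset.sum_le_sum (fun i _ => hHicard i)
            _ = t * c := by simp [mul_comm]
      _ ≤ 2 ^ ((k - 1) * (r + 1)) + k * c :=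
          Nat.add_le_add_left (Nat.mul_le_mul_right _ (le_of_lt htk)) _

/-- Frankl–Pach: for all positive `r` and `k` there is a constant `c(r,k)` bounding the
size of any family of sets of size at most `r` that is not disjointly `k`-representable. -/
theorem stmt13 (r k : ℕ) (hr : 0 < r) (hk : 0 < k) :
    ∃ c : ℕ, ∀ {α : Type u} (H : Finset (Finset α)),
      (∀ s ∈ H, s.card ≤ r) → ¬ DisjointlyRepresentable k H → H.card ≤ c := by
  exact aux13 k r
end
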